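/- arXiv:2506.03815 — 9 statements merged into one kernel-verified Lean document; each statement's English description precedes it below -/
import Mathlib

section
/- Let p ≥ 1 and m ≥ 2 be integers and let D_SG(m) = {i/(m−1) : i = 0, 1, …, m−1}^p be the static grid design with m^p points. Then for every monotone function f ∈ Ω, the volume of the uncertain region satisfies V(U(D_SG(m), f)) ≤ 1 − (m−2)^p/(m−1)^p. -/
open MeasureTheory Set

/-- The uncertain region `U(D, f)` on the cube `[0,1]^p`: points not certainly negative
(below a design point with negative outcome) nor certainly positive. -/
def uncertainRegion (p : ℕ) (D : Set (Fin p → ℝ)) (f : (Fin p → ℝ) → ℝ) :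
    Set (Fin p → ℝ) :=
  Icc 0 1 \ ((⋃ x ∈ {y ∈ D | f y = -1}, Icc (0 : Fin p → ℝ) x) ∪
             (⋃ x ∈ {y ∈ D | f y = 1}, Icc x (1 : Fin p → ℝ)))

/-- `Ω`: monotone `{-1,1}`-valued functions on the cube `[0,1]^p`. -/
def OmegaSet (p : ℕ) : Set ((Fin p → ℝ) → ℝ) :=
  {f | MonotoneOn f (Icc 0 1) ∧ ∀ x ∈ Icc (0 : Fin p → ℝ) 1, f x = -1 ∨ f x = 1}

/-- The static grid design `D_SG(m) = {i/(m-1) : i = 0, …, m-1}^p`. -/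
def staticGrid (p m : ℕ) : Set (Fin p → ℝ) :=
  {x | ∀ k, ∃ i : ℕ, i < m ∧ x k = (i : ℝ) / ((m : ℝ) - 1)}

/-- Theorem 1 (upper bound part): for the static grid design with `m^p` points,
every monotone `f` has uncertain volume at most `1 - (m-2)^p/(m-1)^p`. -/
theorem staticGrid_uncertain_volume_le (p m : ℕ) (hp : 1 ≤ p) (hm : 2 ≤ m)
    (f : (Fin p → ℝ) → ℝ) (hf : f ∈ OmegaSet p) :
    volume (uncertainRegion p (staticGrid p m) f)
      ≤ ENNReal.ofReal (1 - ((m : ℝ) - 2) ^ p / ((m : ℝ) - 1) ^ p) := by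
  classical
  obtain ⟨hmono, hval⟩ := hf
  set n : ℕ := m - 1 with hn
  have hn1 : 1 ≤ n := by omega
  have hmn : m = n + 1 := by omega
  haveI : NeZero n := ⟨by omega⟩
  haveI : NeZero p := ⟨by omega⟩
  have hnpos : (0:ℝ) < (n:ℝ) := by exact_mod_cast hn1
  have hm1 : ((m:ℝ) - 1) = (n:ℝ) := by rw [hmn]; push_cast; ring
  -- lower and upper corners of cells
  set L : (Fin p → Fin n) → (Fin p → ℝ) := fun j k => (j k : ℝ) / n with hLdef
  set R : (Fin p → Fin n) → (Fin p → ℝ) := fun j k => ((j k : ℝ) + 1) / n with hRdef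
  have hL01 : ∀ j, L j ∈ Icc (0 : Fin p → ℝ) 1 := by
    intro j
    constructor <;> intro k
    · exact div_nonneg (Nat.cast_nonneg _) hnpos.le
    · show (j k : ℝ) / n ≤ 1
      rw [div_le_one hnpos]
      exact_mod_cast (j k).2.le
  have hR01 : ∀ j, R j ∈ Icc (0 : Fin p → ℝ) 1 := by
    intro j
    constructor <;> intro k
    · exact div_nonneg (by positivity) hnpos.le
    · show ((j k : ℝ) + 1) / n ≤ 1
      rw [div_le_one hnpos]
      have : (j k : ℕ) + 1 ≤ n := (j k).2
      exact_mod_cast this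
  have hLgrid : ∀ j, L j ∈ staticGrid p m := by
    intro j k
    refine ⟨j k, ?_, ?_⟩
    · have := (j k).2; omega
    · show (j k : ℝ) / n = _
      rw [hm1]
  have hRgrid : ∀ j, R j ∈ staticGrid p m := by
    intro j k
    refine ⟨(j k : ℕ) + 1, ?_, ?_⟩
    · have := (j k).2; omega
    · show ((j k : ℝ) + 1) / n = _
      rw [hm1]; push_cast; ring
  -- cells and uncertain cell index set
  set C : (Fin p → Fin n) → Set (Fin p → ℝ) :=
    fun j => Set.pi Set.univ (fun k => Ioc (L j k) (R j k)) with hCdef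
  set S : Finset (Fin p → Fin n) :=
    Finset.univ.filter (fun j => f (L j) = -1 ∧ f (R j) = 1) with hSdef
  -- covering
  have hcover : uncertainRegion p (staticGrid p m) f ⊆
      (⋃ k : Fin p, {x : Fin p → ℝ | x k = 0}) ∪ ⋃ j ∈ S, C j := by
    rintro x ⟨hx01, hxnot⟩
    by_cases h0 : ∃ k, x k = 0
    · left; obtain ⟨k, hk⟩ := h0; exact mem_iUnion.2 ⟨k, hk⟩
    right
    push_neg at h0
    have hxpos : ∀ k, 0 < x k := fun k => lt_of_le_of_ne (hx01.1 k) (Ne.symm (h0 k))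
    have hjex : ∀ k, ∃ i : Fin n, (i:ℝ)/n < x k ∧ x k ≤ ((i:ℝ)+1)/n := by
      intro k
      set a := (n:ℝ) * x k with ha
      have hapos : 0 < a := mul_pos hnpos (hxpos k)
      have h1 : 1 ≤ ⌈a⌉₊ := Nat.one_le_iff_ne_zero.2 (by positivity)
      have h2 : ⌈a⌉₊ ≤ n := by
        apply Nat.ceil_le.2
        have hx1 : x k ≤ 1 := by simpa using hx01.2 k
        nlinarith
      refine ⟨⟨⌈a⌉₊ - 1, by omega⟩, ?_, ?_⟩
      · show ((⌈a⌉₊ - 1 : ℕ) : ℝ) / n < x k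
        rw [div_lt_iff₀ hnpos]
        have hc := Nat.ceil_lt_add_one hapos.le
        rw [Nat.cast_sub h1]
        push_cast
        rw [ha] at hc ⊢
        nlinarith
      · show x k ≤ (((⌈a⌉₊ - 1 : ℕ) : ℝ) + 1) / n
        rw [le_div_iff₀ hnpos]
        have hc := Nat.le_ceil a
        rw [Nat.cast_sub h1]
        push_cast
        rw [ha] at hc
        nlinarith
    choose j hj1 hj2 using hjex
    have hxC : x ∈ C j := fun k _ => ⟨hj1 k, hj2 k⟩
    have hLlex : L j ≤ x := fun k => (hj1 k).le
    have hxleR : x ≤ R j := fun k => hj2 k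
    have hfL : f (L j) = -1 := by
      rcases hval (L j) (hL01 j) with h | h
      · exact h
      · exfalso
        exact hxnot (Or.inr (mem_iUnion₂.2 ⟨L j, ⟨hLgrid j, h⟩, hLlex, hx01.2⟩))
    have hfR : f (R j) = 1 := by
      rcases hval (R j) (hR01 j) with h | h
      · exfalso
        exact hxnot (Or.inl (mem_iUnion₂.2 ⟨R j, ⟨hRgrid j, h⟩, hx01.1, hxleR⟩))
      · exact h
    exact mem_iUnion₂.2 ⟨j, Finset.mem_filter.2 ⟨Finset.mem_univ _, hfL, hfR⟩, hxC⟩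
  -- cell volume
  have hvolC : ∀ j, volume (C j) = ENNReal.ofReal ((1:ℝ)/n) ^ p := by
    intro j
    rw [hCdef]
    rw [volume_pi_pi]
    have : ∀ k : Fin p, volume (Ioc (L j k) (R j k)) = ENNReal.ofReal ((1:ℝ)/n) := by
      intro k
      rw [Real.volume_Ioc]
      congr 1
      show ((j k : ℝ) + 1) / n - (j k : ℝ) / n = 1 / n
      field_simp
      ring
    simp only [this, Finset.prod_const, Finset.card_univ, Fintype.card_fin]
  -- counting: no two uncertain cells on a common diagonal
  have hkey : ∀ j ∈ S, ∀ j' ∈ S, (∀ k, (j k : ℕ) + 1 ≤ (j' k : ℕ)) → False := by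
    intro j hj j' hj' hle
    have h1 : R j ≤ L j' := by
      intro k
      show ((j k : ℝ) + 1) / n ≤ (j' k : ℝ) / n
      gcongr
      exact_mod_cast hle k
    have h2 := hmono (hR01 j) (hL01 j') h1
    have hj2 := (Finset.mem_filter.1 hj).2.2
    have hj'1 := (Finset.mem_filter.1 hj').2.1
    rw [hj2, hj'1] at h2
    linarith
  -- the diagonal-shift map
  set t : (Fin p → Fin n) → ℕ := fun j => Finset.univ.inf' Finset.univ_nonempty (fun k => (j k : ℕ)) with htdef
  have ht_le : ∀ j k, t j ≤ (j k : ℕ) := fun j k => Finset.inf'_le _ (Finset.mem_univ k)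
  have ht_ex : ∀ j, ∃ k, (j k : ℕ) = t j := by
    intro j
    obtain ⟨k, _, hk⟩ := Finset.exists_mem_eq_inf' (Finset.univ_nonempty) (fun k => (j k : ℕ))
    exact ⟨k, hk.symm⟩
  set ψ : (Fin p → Fin n) → (Fin p → Fin n) :=
    fun j k => ⟨(j k : ℕ) - t j, by have := (j k).2; omega⟩ with hψdef
  set T : Finset (Fin p → Fin n) := Finset.univ.filter (fun j => ∃ k, (j k : ℕ) = 0) with hTdef
  have hmaps : ∀ j ∈ S, ψ j ∈ T := by
    intro j _
    obtain ⟨k, hk⟩ := ht_ex j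
    exact Finset.mem_filter.2 ⟨Finset.mem_univ _, k, by simp [hψdef, hk]⟩
  have hinj : Set.InjOn ψ S := by
    intro j hj j' hj' heq
    have heqk : ∀ k, (j k : ℕ) - t j = (j' k : ℕ) - t j' := by
      intro k
      have := congrFun heq k
      exact congrArg Fin.val this
    rcases lt_trichotomy (t j) (t j') with h | h | h
    · exfalso
      apply hkey j hj j' hj'
      intro k
      have h1 := heqk k; have h2 := ht_le j k; have h3 := ht_le j' k
      omega
    · funext k
      have h1 := heqk k; have h2 := ht_le j k; have h3 := ht_le j' k
      exact Fin.ext (by omega)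
    · exfalso
      apply hkey j' hj' j hj
      intro k
      have h1 := heqk k; have h2 := ht_le j k; have h3 := ht_le j' k
      omega
  have hST : S.card ≤ T.card := Finset.card_le_card_of_injOn ψ hmaps hinj
  -- |T| ≤ n^p - (n-1)^p
  have hTc : (n-1)^p ≤ (Finset.univ.filter (fun j : Fin p → Fin n => ¬ ∃ k, (j k : ℕ) = 0)).card := by
    have := Finset.card_le_card_of_injOn
      (f := fun (h : Fin p → Fin (n-1)) => (fun k => (⟨(h k : ℕ) + 1, by have := (h k).2; omega⟩ : Fin n)))
      (s := Finset.univ)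
      (t := Finset.univ.filter (fun j : Fin p → Fin n => ¬ ∃ k, (j k : ℕ) = 0))
      (by intro h _
          refine Finset.mem_filter.2 ⟨Finset.mem_univ _, ?_⟩
          rintro ⟨k, hk⟩
          simp at hk)
      (by intro h _ h' _ heq
          funext k
          have := congrArg Fin.val (congrFun heq k)
          simp at this
          exact Fin.ext this)
    simpa [Fintype.card_fun] using this
  have hTcard : T.card ≤ n ^ p - (n-1) ^ p := by
    have hsplit : T.card
        + (Finset.univ.filter (fun j : Fin p → Fin n => ¬ ∃ k, (j k : ℕ) = 0)).card
        = n ^ p := by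
      rw [hTdef, Finset.card_filter_add_card_filter_not]
      simp [Fintype.card_fun]
    refine Nat.le_sub_of_add_le ?_
    calc T.card + (n-1)^p ≤ T.card + _ := Nat.add_le_add_left hTc _
      _ = n ^ p := hsplit
  have hScard : S.card ≤ n ^ p - (n-1) ^ p := le_trans hST hTcard
  -- put it together
  calc volume (uncertainRegion p (staticGrid p m) f)
      ≤ volume ((⋃ k : Fin p, {x : Fin p → ℝ | x k = 0}) ∪ ⋃ j ∈ S, C j) :=
        measure_mono hcover
    _ ≤ volume (⋃ k : Fin p, {x : Fin p → ℝ | x k = 0}) + volume (⋃ j ∈ S, C j) :=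
        measure_union_le _ _
    _ = volume (⋃ j ∈ S, C j) := by
        have h0 : volume (⋃ k : Fin p, {x : Fin p → ℝ | x k = 0}) = 0 := by
          refine measure_iUnion_null fun k => ?_
          rw [volume_pi]
          exact MeasureTheory.Measure.pi_hyperplane _ k 0
        rw [h0, zero_add]
    _ ≤ ∑ j ∈ S, volume (C j) := measure_biUnion_finset_le _ _
    _ = S.card • ENNReal.ofReal ((1:ℝ)/n) ^ p := by
        rw [Finset.sum_congr rfl (fun j _ => hvolC j), Finset.sum_const]
    _ ≤ ENNReal.ofReal (1 - ((m : ℝ) - 2) ^ p / ((m : ℝ) - 1) ^ p) := by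
        rw [nsmul_eq_mul, ← ENNReal.ofReal_pow (by positivity),
          ← ENNReal.ofReal_natCast S.card, ← ENNReal.ofReal_mul (Nat.cast_nonneg _)]
        apply ENNReal.ofReal_le_ofReal
        have hpow : ((n-1:ℕ):ℝ)^p ≤ ((n:ℕ):ℝ)^p := by
          apply pow_le_pow_left₀ (by positivity)
          exact_mod_cast Nat.sub_le n 1
        have hcast : ((n ^ p - (n-1) ^ p : ℕ) : ℝ) = (n:ℝ)^p - ((n-1:ℕ):ℝ)^p := by
          rw [Nat.cast_sub (Nat.pow_le_pow_left (Nat.sub_le n 1) p)]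
          push_cast; ring
        have hm2 : (m:ℝ) - 2 = ((n-1:ℕ):ℝ) := by
          rw [hmn, Nat.cast_sub hn1]; push_cast; ring
        rw [hm1, hm2]
        have h1 : (S.card : ℝ) * ((1:ℝ)/n)^p ≤ ((n:ℝ)^p - ((n-1:ℕ):ℝ)^p) * ((1:ℝ)/n)^p := by
          apply mul_le_mul_of_nonneg_right ?_ (by positivity)
          rw [← hcast]
          exact_mod_cast hScard
        refine le_trans h1 (le_of_eq ?_)
        field_simp
        rw [one_div, inv_pow, mul_comm ((n:ℝ)^p), mul_assoc, mul_inv_cancel₀ (pow_ne_zero p hnpos.ne'), mul_one]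
end

section
/- Let p = 1 and let D ⊆ [0,1] be any finite set of n points. Then there exists a monotone function f ∈ Ω such that V(U(D, f)) ≥ 1/(n+1); consequently sup_{f ∈ Ω} V(U(D, f)) ≥ 1/(n+1) for every static design D with n points. -/
open MeasureTheory Set
open scoped ENNReal

/-- The uncertain region `U(D, f)` for a design `D ⊆ [0,1]` (case `p = 1`). -/
def uncertainRegion1 (D : Set ℝ) (f : ℝ → ℝ) : Set ℝ :=
  Icc 0 1 \ ((⋃ x ∈ {y ∈ D | f y = -1}, Icc (0 : ℝ) x) ∪
             (⋃ x ∈ {y ∈ D | f y = 1}, Icc x (1 : ℝ)))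

/-- `Ω`: monotone `{-1,1}`-valued functions on `[0,1]`. -/
def Omega1 : Set (ℝ → ℝ) :=
  {f | MonotoneOn f (Icc 0 1) ∧ ∀ x ∈ Icc (0 : ℝ) 1, f x = -1 ∨ f x = 1}

lemma gap_lemma : ∀ (L : List ℝ) (a : ℝ), (a :: L).Pairwise (· ≤ ·) →
    ∃ u v, a ≤ u ∧ u ≤ v ∧ v ≤ (a :: L).getLast (by simp) ∧
      ((a :: L).getLast (by simp) - a) / L.length ≤ v - u ∧
      ∀ y ∈ a :: L, y ≤ u ∨ v ≤ y := by
  intro L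
  induction L with
  | nil =>
    intro a _
    refine ⟨a, a, le_refl a, le_refl a, by simp, by simp, ?_⟩
    simp
  | cons x L' ih =>
    intro a hs
    have hs' : (x :: L').Pairwise (· ≤ ·) := hs.of_cons
    have hax : a ≤ x := (List.pairwise_cons.mp hs).1 x (by simp)
    obtain ⟨u, v, hxu, huv, hvl, hgap, hall⟩ := ih x hs'
    have hlast : ((a :: x :: L').getLast (by simp) : ℝ) = (x :: L').getLast (by simp) := by
      simp [List.getLast_cons]
    set b := ((x :: L').getLast (by simp) : ℝ) with hb
    have hxb : x ≤ b := le_trans hxu (le_trans huv hvl)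
    rw [hlast]
    by_cases hcase : (b - a) / (L'.length + 1) ≤ x - a
    · refine ⟨a, x, le_refl a, hax, hxb, by simpa using hcase, ?_⟩
      intro y hy
      rcases List.mem_cons.mp hy with rfl | hy
      · left; rfl
      · right
        rcases List.mem_cons.mp hy with rfl | hy
        · exact le_refl y
        · exact (List.pairwise_cons.mp hs').1 y hy
    · push_neg at hcase
      have hk : L'.length ≠ 0 := by
        intro h0
        obtain rfl := List.length_eq_zero_iff.mp h0
        have hbx : b = x := by simp [hb]
        rw [hbx] at hcase
        norm_num at hcase
      have hkpos : (0:ℝ) < L'.length := by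
        exact_mod_cast Nat.pos_of_ne_zero hk
      refine ⟨u, v, le_trans hax hxu, huv, hvl, ?_, ?_⟩
      · have hgap' : (b - x) / L'.length ≤ v - u := hgap
        have hL : (1:ℝ) ≤ L'.length := by exact_mod_cast Nat.one_le_iff_ne_zero.mpr hk
        have hmul : (x - a) * (L'.length + 1) < b - a :=
          (lt_div_iff₀ (by linarith)).mp hcase
        have key : (b - a) / (L'.length + 1) ≤ (b - x) / L'.length := by
          rw [div_le_div_iff₀ (by linarith) (by linarith)]
          nlinarith [hmul, hL]
        simp only [List.length_cons]
        push_cast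
        exact le_trans key hgap'
      · intro y hy
        rcases List.mem_cons.mp hy with rfl | hy
        · left; exact le_trans hax hxu
        · exact hall y hy

/-- Theorem 2, case `p = 1`: for any static design of `n` points in `[0,1]` there is a
monotone `f` with uncertain volume at least `1/(n+1)`; consequently the supremum over
`Ω` is at least `1/(n+1)`. -/
theorem static_design_lower_bound_dim_one (D : Finset ℝ) (n : ℕ)
    (hD : ↑D ⊆ Icc (0 : ℝ) 1) (hcard : D.card = n) :
    (∃ f ∈ Omega1, (1 : ℝ≥0∞) / (n + 1) ≤ volume (uncertainRegion1 ↑D f)) ∧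
    (1 : ℝ≥0∞) / (n + 1) ≤ ⨆ f ∈ Omega1, volume (uncertainRegion1 ↑D f) := by
  classical
  set L0 := D.sort (· ≤ ·) with hL0
  have hmemL0 : ∀ y, y ∈ L0 ↔ y ∈ D := fun y => Finset.mem_sort _
  have hDmem : ∀ y ∈ L0, y ∈ Icc (0:ℝ) 1 := fun y hy => hD ((hmemL0 y).mp hy)
  have hsortL0 : L0.Pairwise (· ≤ ·) := D.pairwise_sort _
  have hlen : L0.length = n := by rw [hL0, Finset.length_sort, hcard]
  set L : List ℝ := L0 ++ [1] with hLdef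
  have hsortL : ((0:ℝ) :: L).Pairwise (· ≤ ·) := by
    rw [List.pairwise_cons]
    constructor
    · intro b hb
      rcases List.mem_append.mp hb with hb | hb
      · exact (hDmem b hb).1
      · simp at hb; subst hb; norm_num
    · rw [hLdef]
      refine List.pairwise_append.mpr ⟨hsortL0, List.pairwise_singleton _ _, ?_⟩
      intro x hx y hy
      simp only [List.mem_singleton] at hy
      subst hy
      exact (hDmem x hx).2
  obtain ⟨u, v, h0u, huv, hvl, hgap, hall⟩ := gap_lemma L 0 hsortL
  have hlast : ((0:ℝ) :: L).getLast (by simp) = 1 := by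
    have h := List.getLast_concat (l := (0:ℝ) :: L0) (a := (1:ℝ))
    simpa [List.concat_eq_append, hLdef] using h
  rw [hlast] at hvl hgap
  have hlenL : (L.length : ℝ) = n + 1 := by
    rw [hLdef]; simp [hlen]
  rw [hlenL] at hgap
  have hgapR : 1 / ((n:ℝ) + 1) ≤ v - u := by
    have : ((1:ℝ) - 0) / ((n:ℝ)+1) = 1 / ((n:ℝ)+1) := by ring
    linarith [hgap, this.symm ▸ hgap]
  -- threshold function
  set f : ℝ → ℝ := fun y => if y < v then -1 else 1 with hf
  have hfΩ : f ∈ Omega1 := by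
    constructor
    · intro x _ y _ hxy
      by_cases h1 : x < v
      · by_cases h2 : y < v <;> simp [hf, h1, h2] <;> norm_num
      · have h2 : ¬ y < v := fun h => h1 (lt_of_le_of_lt hxy h)
        simp [hf, h1, h2]
    · intro x _
      by_cases h1 : x < v <;> simp [hf, h1]
  have hDside : ∀ y ∈ (D : Set ℝ), y ≤ u ∨ v ≤ y := by
    intro y hy
    refine hall y ?_
    simp only [hLdef, List.mem_cons, List.mem_append, List.mem_singleton, hmemL0 y]
    exact Or.inr (Or.inl (Finset.mem_coe.mp hy))
  have hsub : Ioo u v ⊆ uncertainRegion1 ↑D f := by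
    intro z hz
    constructor
    · exact ⟨le_trans h0u hz.1.le, le_trans hz.2.le hvl⟩
    · intro hmem
      rcases hmem with hmem | hmem
      · simp only [mem_iUnion, mem_setOf_eq, exists_prop] at hmem
        obtain ⟨x, ⟨hxD, hfx⟩, hzx⟩ := hmem
        have hxv : x < v := by
          by_contra hcon
          simp [hf, hcon] at hfx
          norm_num at hfx
        rcases hDside x hxD with hxu | hvx
        · exact absurd (le_trans hzx.2 hxu) (not_le.mpr hz.1)
        · linarith
      · simp only [mem_iUnion, mem_setOf_eq, exists_prop] at hmem
        obtain ⟨x, ⟨hxD, hfx⟩, hzx⟩ := hmem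
        have hxv : ¬ x < v := by
          intro hcon
          simp [hf, hcon] at hfx
          norm_num at hfx
        push_neg at hxv
        linarith [hz.2, hzx.1]
  have hvol : (1 : ℝ≥0∞) / (n + 1) ≤ volume (uncertainRegion1 ↑D f) := by
    have h1 : volume (Ioo u v) ≤ volume (uncertainRegion1 ↑D f) := measure_mono hsub
    rw [Real.volume_Ioo] at h1
    refine le_trans ?_ h1
    have heq : (1 : ℝ≥0∞) / (n + 1) = ENNReal.ofReal (1 / ((n:ℝ) + 1)) := by
      rw [ENNReal.ofReal_div_of_pos (by positivity), ENNReal.ofReal_one,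
        ENNReal.ofReal_add (by positivity) zero_le_one, ENNReal.ofReal_natCast,
        ENNReal.ofReal_one]
    rw [heq]
    exact ENNReal.ofReal_le_ofReal hgapR
  exact ⟨⟨f, hfΩ, hvol⟩, le_iSup₂_of_le f hfΩ hvol⟩
end

section
/- Let p ≥ 1 and g ≥ 1 be integers and let f ∈ Ω be monotone. Define the number of functional evaluations of the grouped-adaptive grid design after g refinement stages as m_GG(g) = 2^p + Σ_{l=1}^g card( G_l ∩ U(G_{l−1}, f) ), where card denotes cardinality. Then m_GG(g) ≤ 2^p + Σ_{l=1}^g p·(2^l + 1)^{p−1}. -/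
open MeasureTheory Set

/-- The grid `{i/m : i = 0, 1, …, m}^p` with `(m+1)^p` points; `dyGrid p (2^l)` is the
dyadic grid `G_l` with `(2^l + 1)^p` points. -/
def dyGrid (p m : ℕ) : Set (Fin p → ℝ) :=
  {x | ∀ k, ∃ i : ℕ, i ≤ m ∧ x k = (i : ℝ) / (m : ℝ)}

/-- Interpolating grid point on `G_{l-1}`: coordinates with index `< j` are rounded up,
the rest rounded down. -/
noncomputable def zfun (p n : ℕ) (c : Fin p → ℕ) (j : ℕ) : Fin p → ℝ :=
  fun k => ((if (k : ℕ) < j then (c k + 1) / 2 else c k / 2 : ℕ) : ℝ) / n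

/-- Recover the integer coordinates of a grid point. -/
noncomputable def cOf (p n : ℕ) (x : Fin p → ℝ) : Fin p → ℕ := fun k => ⌊x k * n⌋₊

lemma cOf_spec {p n : ℕ} (hn : 0 < n) {x : Fin p → ℝ} (hx : x ∈ dyGrid p n) (k : Fin p) :
    cOf p n x k ≤ n ∧ x k = (cOf p n x k : ℝ) / n := by
  obtain ⟨i, hi, hxk⟩ := hx k
  have hn' : (0:ℝ) < n := by exact_mod_cast hn
  have h1 : x k * n = i := by rw [hxk]; field_simp
  have hc : cOf p n x k = i := by
    unfold cOf; rw [h1, Nat.floor_natCast]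
  rw [hc]; exact ⟨hi, hxk⟩

lemma grid_subset_Icc {p n : ℕ} (hn : 0 < n) : dyGrid p n ⊆ Icc (0 : Fin p → ℝ) 1 := by
  intro x hx
  have hn' : (0:ℝ) < n := by exact_mod_cast hn
  rw [Set.mem_Icc]
  constructor <;> (rw [Pi.le_def]; intro k)
  · obtain ⟨i, _, hxk⟩ := hx k
    rw [hxk]; positivity
  · obtain ⟨i, hi, hxk⟩ := hx k
    rw [hxk, Pi.one_apply, div_le_one hn']
    exact_mod_cast hi

lemma div_n_le_div_2n {n a b : ℕ} (hn : 0 < n) (h : 2 * a ≤ b) :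
    (a : ℝ) / n ≤ (b : ℝ) / (2 * n) := by
  have hn' : (0:ℝ) < n := by exact_mod_cast hn
  rw [div_le_div_iff₀ hn' (by positivity)]
  push_cast
  nlinarith [mul_le_mul_of_nonneg_right (by exact_mod_cast h : (2:ℝ) * a ≤ b) hn'.le]

lemma div_2n_le_div_n {n a b : ℕ} (hn : 0 < n) (h : b ≤ 2 * a) :
    (b : ℝ) / (2 * n) ≤ (a : ℝ) / n := by
  have hn' : (0:ℝ) < n := by exact_mod_cast hn
  rw [div_le_div_iff₀ (by positivity) hn']
  push_cast
  nlinarith [mul_le_mul_of_nonneg_right (by exact_mod_cast h : (b:ℝ) ≤ 2 * a) hn'.le]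

lemma zfun_le {p n : ℕ} (hn : 0 < n) {c c' : Fin p → ℕ} {j j' : ℕ}
    (h : ∀ k : Fin p, (if (k : ℕ) < j then (c k + 1) / 2 else c k / 2)
        ≤ (if (k : ℕ) < j' then (c' k + 1) / 2 else c' k / 2)) :
    zfun p n c j ≤ zfun p n c' j' := by
  rw [Pi.le_def]
  intro k
  unfold zfun
  have hn' : (0:ℝ) < n := by exact_mod_cast hn
  rw [div_le_div_iff_of_pos_right hn']
  exact_mod_cast h k

lemma zfun_mem_grid {p n : ℕ} {c : Fin p → ℕ} (hc : ∀ k, c k ≤ 2 * n) (j : ℕ) :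
    zfun p n c j ∈ dyGrid p n := by
  intro k
  refine ⟨if (k : ℕ) < j then (c k + 1) / 2 else c k / 2, ?_, rfl⟩
  have := hc k
  split <;> omega

/-- The stage index of an uncertain point: least `j` with `f (zfun ... j) = 1`. -/
noncomputable def Kfun (p n : ℕ) (f : (Fin p → ℝ) → ℝ) (x : Fin p → ℝ) : ℕ :=
  sInf {j | f (zfun p n (cOf p (2 * n) x) j) = 1}

/-- The injection used for counting uncertain grid points. -/
noncomputable def Phi (p n : ℕ) (f : (Fin p → ℝ) → ℝ) (x : Fin p → ℝ) :
    ℕ × (Fin p → ℕ) :=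
  (Kfun p n f x - 1,
    fun j => if (j : ℕ) = Kfun p n f x - 1 then 0 else cOf p (2 * n) x j)

/-- Structural facts about an uncertain grid point. -/
lemma struct (p n : ℕ) (hp : 1 ≤ p) (hn : 1 ≤ n)
    (f : (Fin p → ℝ) → ℝ) (hf : f ∈ OmegaSet p)
    {x : Fin p → ℝ} (hx : x ∈ dyGrid p (2 * n) ∩ uncertainRegion p (dyGrid p n) f) :
    1 ≤ Kfun p n f x ∧
    Kfun p n f x ≤ p ∧
    f (zfun p n (cOf p (2 * n) x) (Kfun p n f x - 1)) = -1 ∧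
    f (zfun p n (cOf p (2 * n) x) (Kfun p n f x)) = 1 ∧
    ∀ k : Fin p, (k : ℕ) = Kfun p n f x - 1 →
      cOf p (2 * n) x k % 2 = 1 := by
  unfold Kfun
  obtain ⟨hxg, hxu⟩ := hx
  have h2n : 0 < 2 * n := by omega
  set c := cOf p (2 * n) x with hc_def
  have hc : ∀ k, c k ≤ 2 * n ∧ x k = (c k : ℝ) / ((2 * n : ℕ) : ℝ) :=
    fun k => cOf_spec h2n hxg k
  have hcle : ∀ k, c k ≤ 2 * n := fun k => (hc k).1
  have hzg : ∀ j, zfun p n c j ∈ dyGrid p n := zfun_mem_grid hcle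
  have hzI : ∀ j, zfun p n c j ∈ Icc (0 : Fin p → ℝ) 1 := fun j => grid_subset_Icc hn (hzg j)
  have hxI : x ∈ Icc (0 : Fin p → ℝ) 1 := hxu.1
  have hcast : ((2 * n : ℕ) : ℝ) = 2 * (n : ℝ) := by push_cast; ring
  have hnot1 : ∀ y, y ∈ dyGrid p n → f y = -1 → x ≤ y → False := by
    intro y hy hfy hxy
    exact hxu.2 (Or.inl (Set.mem_biUnion (⟨hy, hfy⟩ : y ∈ {y ∈ dyGrid p n | f y = -1})
      ⟨hxI.1, hxy⟩))
  have hnot2 : ∀ y, y ∈ dyGrid p n → f y = 1 → y ≤ x → False := by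
    intro y hy hfy hyx
    exact hxu.2 (Or.inr (Set.mem_biUnion (⟨hy, hfy⟩ : y ∈ {y ∈ dyGrid p n | f y = 1})
      ⟨hyx, hxI.2⟩))
  have hz0le : zfun p n c 0 ≤ x := by
    intro k
    show ((if (k : ℕ) < 0 then (c k + 1) / 2 else c k / 2 : ℕ) : ℝ) / n ≤ x k
    rw [if_neg (Nat.not_lt_zero _), (hc k).2, hcast]
    exact div_n_le_div_2n hn (by omega)
  have hxle : x ≤ zfun p n c p := by
    intro k
    show x k ≤ ((if (k : ℕ) < p then (c k + 1) / 2 else c k / 2 : ℕ) : ℝ) / n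
    rw [if_pos k.isLt, (hc k).2, hcast]
    exact div_2n_le_div_n hn (by omega)
  have hf0 : f (zfun p n c 0) = -1 := by
    rcases hf.2 _ (hzI 0) with h | h
    · exact h
    · exact absurd (hnot2 _ (hzg 0) h hz0le) (by simp)
  have hfp : f (zfun p n c p) = 1 := by
    rcases hf.2 _ (hzI p) with h | h
    · exact absurd (hnot1 _ (hzg p) h hxle) (by simp)
    · exact h
  set K := sInf {j | f (zfun p n c j) = 1} with hK_def
  have hKmem : f (zfun p n c K) = 1 := Nat.sInf_mem (s := {j | f (zfun p n c j) = 1}) ⟨p, hfp⟩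
  have hKle : K ≤ p := Nat.sInf_le hfp
  have hK1 : 1 ≤ K := by
    by_contra h
    have hK0 : K = 0 := by omega
    rw [hK0, hf0] at hKmem
    norm_num at hKmem
  have hKm1 : f (zfun p n c (K - 1)) = -1 := by
    have hne : f (zfun p n c (K - 1)) ≠ 1 :=
      fun h => Nat.notMem_of_lt_sInf (show K - 1 < K by omega) h
    rcases hf.2 _ (hzI (K - 1)) with h | h
    · exact h
    · exact absurd h hne
  refine ⟨hK1, hKle, hKm1, hKmem, ?_⟩
  intro k hk
  by_contra hodd
  have heven : c k % 2 = 0 := by omega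
  have hzeq : zfun p n c (K - 1) = zfun p n c K := by
    funext k'
    unfold zfun
    rcases lt_trichotomy ((k' : ℕ)) (K - 1) with h | h | h
    · rw [if_pos h, if_pos (by omega)]
    · have hkk : k' = k := Fin.ext (by omega)
      rw [if_neg (by omega), if_pos (by omega), hkk,
        show c k / 2 = (c k + 1) / 2 by omega]
    · rw [if_neg (by omega), if_neg (by omega)]
  rw [hzeq, hKmem] at hKm1
  norm_num at hKm1

/-- Key counting lemma: the number of points of `G_l` in the uncertain region of `G_{l-1}`
is at most `p (2^l + 1)^(p-1)`. -/
lemma key_bound (p n : ℕ) (hp : 1 ≤ p) (hn : 1 ≤ n)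
    (f : (Fin p → ℝ) → ℝ) (hf : f ∈ OmegaSet p) :
    (dyGrid p (2 * n) ∩ uncertainRegion p (dyGrid p n) f).ncard
      ≤ p * (2 * n + 1) ^ (p - 1) := by
  classical
  have h2n : 0 < 2 * n := by omega
  set S := dyGrid p (2 * n) ∩ uncertainRegion p (dyGrid p n) f with hS_def
  set T : Finset (ℕ × (Fin p → ℕ)) := (Finset.range p).biUnion fun κ : ℕ =>
    {κ} ×ˢ Fintype.piFinset fun j : Fin p =>
      if (j : ℕ) = κ then {0} else Finset.range (2 * n + 1) with hT_def
  -- Φ maps S into T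
  have hmaps : ∀ x ∈ S, Phi p n f x ∈ (T : Set (ℕ × (Fin p → ℕ))) := by
    intro x hx
    obtain ⟨hK1, hKp, hfm, hfK, hodd⟩ := struct p n hp hn f hf hx
    rw [Finset.mem_coe, hT_def, Finset.mem_biUnion]
    refine ⟨Kfun p n f x - 1, Finset.mem_range.mpr (by
      show Kfun p n f x - 1 < p
      have : Kfun p n f x ≤ p := hKp
      have : 1 ≤ Kfun p n f x := hK1
      omega), ?_⟩
    rw [Finset.mem_product]
    constructor
    · exact Finset.mem_singleton_self _
    · rw [Fintype.mem_piFinset]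
      intro j
      show (if (j : ℕ) = Kfun p n f x - 1 then (0:ℕ) else cOf p (2 * n) x j)
          ∈ (if (j : ℕ) = Kfun p n f x - 1 then ({0} : Finset ℕ) else Finset.range (2 * n + 1))
      by_cases hj : (j : ℕ) = Kfun p n f x - 1
      · rw [if_pos hj, if_pos hj]; exact Finset.mem_singleton_self _
      · rw [if_neg hj, if_neg hj, Finset.mem_range]
        have := (cOf_spec h2n hx.1 j).1
        omega
  -- injectivity
  have hinj : Set.InjOn (Phi p n f) S := by
    intro x hx x' hx' heq
    obtain ⟨hK1, hKp, hfm, hfK, hodd⟩ := struct p n hp hn f hf hx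
    obtain ⟨hK1', hKp', hfm', hfK', hodd'⟩ := struct p n hp hn f hf hx'
    have h1 : Kfun p n f x - 1 = Kfun p n f x' - 1 := congrArg Prod.fst heq
    have h2 : (fun j : Fin p => if (j : ℕ) = Kfun p n f x - 1 then 0 else cOf p (2 * n) x j)
        = fun j : Fin p => if (j : ℕ) = Kfun p n f x' - 1 then 0 else cOf p (2 * n) x' j :=
      congrArg Prod.snd heq
    set κv := Kfun p n f x - 1 with hκv
    have hKx : Kfun p n f x = κv + 1 := by omega
    have hKx' : Kfun p n f x' = κv + 1 := by
      have : 1 ≤ Kfun p n f x' := hK1'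
      omega
    have hκvp : κv < p := by
      have : Kfun p n f x ≤ p := hKp
      omega
    have hcc : ∀ j : Fin p, (j : ℕ) ≠ κv → cOf p (2 * n) x j = cOf p (2 * n) x' j := by
      intro j hj
      have := congrFun h2 j
      rwa [if_neg hj, if_neg (h1 ▸ hj)] at this
    set j0 : Fin p := ⟨κv, hκvp⟩ with hj0
    have hj0v : (j0 : ℕ) = κv := rfl
    have ho : cOf p (2 * n) x j0 % 2 = 1 := hodd j0 hj0v
    have ho' : cOf p (2 * n) x' j0 % 2 = 1 := hodd' j0 (hj0v.trans h1)
    -- cross comparison: a's coordinate at j0 is ≤ b's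
    have hcross : ∀ a b : Fin p → ℝ, a ∈ S → b ∈ S →
        Kfun p n f a = κv + 1 → Kfun p n f b = κv + 1 →
        (∀ j : Fin p, (j : ℕ) ≠ κv → cOf p (2 * n) a j = cOf p (2 * n) b j) →
        cOf p (2 * n) a j0 % 2 = 1 → cOf p (2 * n) b j0 % 2 = 1 →
        cOf p (2 * n) a j0 ≤ cOf p (2 * n) b j0 := by
      intro a b ha hb hKa hKb hab hoa hob
      by_contra hlt
      push_neg at hlt
      obtain ⟨hKa1, hKap, hfma, hfKa, _⟩ := struct p n hp hn f hf ha
      obtain ⟨hKb1, hKbp, hfmb, hfKb, _⟩ := struct p n hp hn f hf hb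
      have hle : zfun p n (cOf p (2 * n) b) (Kfun p n f b)
          ≤ zfun p n (cOf p (2 * n) a) (Kfun p n f a - 1) := by
        apply zfun_le hn
        intro k
        rw [hKa, hKb]
        by_cases hk : (k : ℕ) = κv
        · have hkj : k = j0 := Fin.ext hk
          rw [if_pos (by omega), if_neg (by omega), hkj]
          omega
        · rw [hab k hk]
          rcases Nat.lt_or_ge ((k : ℕ)) κv with h | h
          · rw [if_pos (by omega), if_pos (by omega)]
          · have : ¬ (k : ℕ) < κv + 1 := by omega
            rw [if_neg this, if_neg (by omega)]
      have hmemb : zfun p n (cOf p (2 * n) b) (Kfun p n f b) ∈ Icc (0 : Fin p → ℝ) 1 :=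
        grid_subset_Icc hn (zfun_mem_grid (fun k => (cOf_spec h2n hb.1 k).1) _)
      have hmema : zfun p n (cOf p (2 * n) a) (Kfun p n f a - 1) ∈ Icc (0 : Fin p → ℝ) 1 :=
        grid_subset_Icc hn (zfun_mem_grid (fun k => (cOf_spec h2n ha.1 k).1) _)
      have hmono := hf.1 hmemb hmema hle
      rw [hfKb, hfma] at hmono
      norm_num at hmono
    have hcc0 : cOf p (2 * n) x j0 = cOf p (2 * n) x' j0 :=
      le_antisymm (hcross x x' hx hx' hKx hKx' hcc ho ho')
        (hcross x' x hx' hx hKx' hKx (fun j hj => (hcc j hj).symm) ho' ho)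
    have hCeq : cOf p (2 * n) x = cOf p (2 * n) x' := by
      funext j
      by_cases hj : (j : ℕ) = κv
      · have : j = j0 := Fin.ext hj
        rw [this]; exact hcc0
      · exact hcc j hj
    funext k
    rw [(cOf_spec h2n hx.1 k).2, (cOf_spec h2n hx'.1 k).2, hCeq]
  -- cardinality of T
  have hTcard : T.card = p * (2 * n + 1) ^ (p - 1) := by
    rw [hT_def, Finset.card_biUnion]
    · have hterm : ∀ κ ∈ Finset.range p,
          ({κ} ×ˢ Fintype.piFinset fun j : Fin p =>
            if (j : ℕ) = κ then ({0} : Finset ℕ) else Finset.range (2 * n + 1)).card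
            = (2 * n + 1) ^ (p - 1) := by
        intro κ hκ
        have hκp : κ < p := Finset.mem_range.mp hκ
        rw [Finset.card_product, Finset.card_singleton, one_mul, Fintype.card_piFinset]
        have hcards : ∀ j : Fin p,
            ((if (j : ℕ) = κ then ({0} : Finset ℕ) else Finset.range (2 * n + 1)).card)
              = if j = (⟨κ, hκp⟩ : Fin p) then 1 else 2 * n + 1 := by
          intro j
          by_cases hj : (j : ℕ) = κ
          · rw [if_pos hj, if_pos (Fin.ext hj)]; simp
          · rw [if_neg hj, if_neg (fun h => hj (by rw [h]))]
            exact Finset.card_range _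
        rw [Finset.prod_congr rfl (fun j _ => hcards j),
          ← Finset.mul_prod_erase Finset.univ _ (Finset.mem_univ (⟨κ, hκp⟩ : Fin p)),
          if_pos rfl, one_mul,
          Finset.prod_congr rfl (fun j hj => if_neg (Finset.ne_of_mem_erase hj)),
          Finset.prod_const, Finset.card_erase_of_mem (Finset.mem_univ _), Finset.card_univ,
          Fintype.card_fin]
      rw [Finset.sum_congr rfl hterm, Finset.sum_const, Finset.card_range, smul_eq_mul]
    · intro κ _ κ' _ hne
      rw [Function.onFun, Finset.disjoint_left]
      intro a haκ haκ'
      rw [Finset.mem_product, Finset.mem_singleton] at haκ haκ'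
      exact hne (haκ.1.symm.trans haκ'.1)
  calc S.ncard ≤ (T : Set (ℕ × (Fin p → ℕ))).ncard :=
        Set.ncard_le_ncard_of_injOn (Phi p n f) hmaps hinj (Finset.finite_toSet T)
    _ = T.card := Set.ncard_coe_finset T
    _ = p * (2 * n + 1) ^ (p - 1) := hTcard

/-- Theorem 3: the number of functional evaluations of the grouped-adaptive grid design
after `g` stages, `m_GG(g) = 2^p + Σ_{l=1}^g card(G_l ∩ U(G_{l-1}, f))`, is at most
`2^p + Σ_{l=1}^g p (2^l + 1)^(p-1)`. -/
theorem grouped_adaptive_grid_eval_bound (p g : ℕ) (hp : 1 ≤ p) (hg : 1 ≤ g)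
    (f : (Fin p → ℝ) → ℝ) (hf : f ∈ OmegaSet p) :
    2 ^ p + ∑ l ∈ Finset.Icc 1 g,
        (dyGrid p (2 ^ l) ∩ uncertainRegion p (dyGrid p (2 ^ (l - 1))) f).ncard
      ≤ 2 ^ p + ∑ l ∈ Finset.Icc 1 g, p * (2 ^ l + 1) ^ (p - 1) := by
  apply Nat.add_le_add_left
  apply Finset.sum_le_sum
  intro l hl
  have hl1 : 1 ≤ l := (Finset.mem_Icc.mp hl).1
  have h2 : 2 ^ l = 2 * 2 ^ (l - 1) := by
    conv_lhs => rw [show l = (l - 1) + 1 by omega]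
    rw [pow_succ]; ring
  rw [h2]
  exact key_bound p (2 ^ (l - 1)) hp Nat.one_le_two_pow f hf
end

section
/- Let p ≥ 1 and l ≥ 0 be integers, set m = 2^l, and let f ∈ Ω be monotone. Then the number of points of the refined grid {i/(2m) : i = 0, 1, …, 2m}^p that lie in the uncertain region determined by the coarse grid satisfies card( {i/(2m) : i = 0, …, 2m}^p ∩ U( {i/m : i = 0, …, m}^p , f) ) ≤ p·(2m + 1)^{p−1}. -/
open MeasureTheory Set

namespace RGAux

noncomputable def idxA (N : ℕ) {p : ℕ} (x : Fin p → ℝ) (k : Fin p) : ℕ := (⌊x k * N⌋).toNat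

noncomputable def idxMin (N : ℕ) {p : ℕ} (hp : 1 ≤ p) (x : Fin p → ℝ) : ℕ :=
  Finset.univ.inf' ⟨⟨0, hp⟩, Finset.mem_univ _⟩ (idxA N x)

noncomputable def idxG (N : ℕ) {p : ℕ} (hp : 1 ≤ p) (x : Fin p → ℝ) (k : Fin p) : ℕ :=
  idxA N x k - idxMin N hp x

noncomputable def kMin (N : ℕ) {p : ℕ} (hp : 1 ≤ p) (x : Fin p → ℝ) : Fin p :=
  if h : ∃ k, idxA N x k = idxMin N hp x then h.choose else ⟨0, hp⟩

lemma kMin_spec (N : ℕ) {p : ℕ} (hp : 1 ≤ p) (x : Fin p → ℝ) :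
    idxA N x (kMin N hp x) = idxMin N hp x := by
  obtain ⟨b, -, hb⟩ := Finset.exists_mem_eq_inf'
    (⟨⟨0, hp⟩, Finset.mem_univ _⟩ : (Finset.univ : Finset (Fin p)).Nonempty) (idxA N x)
  have h : ∃ k, idxA N x k = idxMin N hp x := ⟨b, hb.symm⟩
  rw [kMin, dif_pos h]
  exact h.choose_spec

lemma idxMin_le (N : ℕ) {p : ℕ} (hp : 1 ≤ p) (x : Fin p → ℝ) (k : Fin p) :
    idxMin N hp x ≤ idxA N x k :=
  Finset.inf'_le _ (Finset.mem_univ k)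

lemma grid_idx {N p : ℕ} (hN : 0 < N) {x : Fin p → ℝ}
    (hx : ∀ k, ∃ i : ℕ, i ≤ N ∧ x k = (i : ℝ) / (N : ℝ)) (k : Fin p) :
    idxA N x k ≤ N ∧ x k = (idxA N x k : ℝ) / N := by
  obtain ⟨i, hi, hxk⟩ := hx k
  have hN' : (N : ℝ) ≠ 0 := by positivity
  have h1 : x k * N = (i : ℝ) := by rw [hxk]; field_simp
  have h2 : idxA N x k = i := by
    rw [idxA, h1, Int.floor_natCast, Int.toNat_natCast]
  rw [h2]; exact ⟨hi, hxk⟩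

lemma key {p l : ℕ} {f : (Fin p → ℝ) → ℝ} (hf : f ∈ OmegaSet p)
    {x y : Fin p → ℝ}
    (hx : x ∈ dyGrid p (2 * 2 ^ l) ∩ uncertainRegion p (dyGrid p (2 ^ l)) f)
    (hy : y ∈ dyGrid p (2 * 2 ^ l) ∩ uncertainRegion p (dyGrid p (2 ^ l)) f)
    {t : ℕ} (ht : 1 ≤ t)
    (hab : ∀ k, idxA (2 * 2 ^ l) y k = idxA (2 * 2 ^ l) x k + t) : False := by
  set m := 2 ^ l with hm
  set N := 2 * m with hNdef
  have hm1 : 1 ≤ m := Nat.one_le_two_pow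
  have hN : 0 < N := by omega
  have hNR : (0 : ℝ) < (N : ℝ) := by exact_mod_cast hN
  have hNcast : ((N : ℕ) : ℝ) = 2 * (m : ℝ) := by rw [hNdef]; push_cast; ring
  obtain ⟨hxg, hxu⟩ := hx
  obtain ⟨hyg, hyu⟩ := hy
  set a : Fin p → ℕ := idxA N x with hadef
  set b : Fin p → ℕ := idxA N y with hbdef
  have haN : ∀ k, a k ≤ N := fun k => (grid_idx hN hxg k).1
  have hxk : ∀ k, x k = (a k : ℝ) / N := fun k => (grid_idx hN hxg k).2
  have hbN : ∀ k, b k ≤ N := fun k => (grid_idx hN hyg k).1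
  have hyk : ∀ k, y k = (b k : ℝ) / N := fun k => (grid_idx hN hyg k).2
  set u : Fin p → ℝ := fun k => ((a k + a k % 2 : ℕ) : ℝ) / N with hu
  set v : Fin p → ℝ := fun k => ((b k - b k % 2 : ℕ) : ℝ) / N with hv
  -- grid memberships for u, v
  have half_mem : ∀ c : ℕ, c ≤ N → c % 2 = 0 → ((c : ℝ) / N) = ((c / 2 : ℕ) : ℝ) / m := by
    intro c hc hc2
    have h2 : c = 2 * (c / 2) := by omega
    rw [h2, hNcast]
    rw [Nat.mul_div_cancel_left _ (by norm_num)]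
    push_cast
    rw [mul_div_mul_left _ _ (two_ne_zero)]
  have hug : u ∈ dyGrid p m := by
    intro k
    exact ⟨(a k + a k % 2) / 2, by have := haN k; omega,
      by rw [hu]; exact half_mem _ (by have := haN k; omega) (by omega)⟩
  have hvg : v ∈ dyGrid p m := by
    intro k
    exact ⟨(b k - b k % 2) / 2, by have := hbN k; omega,
      by rw [hv]; exact half_mem _ (by have := hbN k; omega) (by omega)⟩
  -- Icc memberships
  have huI : u ∈ Icc (0 : Fin p → ℝ) 1 := by
    constructor <;> intro k
    · positivity
    · show ((a k + a k % 2 : ℕ) : ℝ) / N ≤ 1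
      rw [div_le_one hNR]
      exact_mod_cast by have := haN k; omega
  have hvI : v ∈ Icc (0 : Fin p → ℝ) 1 := by
    constructor <;> intro k
    · positivity
    · show ((b k - b k % 2 : ℕ) : ℝ) / N ≤ 1
      rw [div_le_one hNR]
      exact_mod_cast by have := hbN k; omega
  rw [uncertainRegion, Set.mem_diff] at hxu hyu
  obtain ⟨hxI, hxn⟩ := hxu
  obtain ⟨hyI, hyn⟩ := hyu
  have hxu_le : x ≤ u := by
    intro k
    rw [hxk k]
    exact div_le_div_of_nonneg_right (Nat.cast_le.mpr (Nat.le_add_right (a k) (a k % 2))) hNR.le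
  have hvy_le : v ≤ y := by
    intro k
    rw [hyk k]
    exact div_le_div_of_nonneg_right (Nat.cast_le.mpr (Nat.sub_le (b k) (b k % 2))) hNR.le
  have huv : u ≤ v := by
    intro k
    apply div_le_div_of_nonneg_right _ hNR.le
    have h1 := hab k
    exact_mod_cast (by omega : a k + a k % 2 ≤ b k - b k % 2)
  have hxmem : x ∈ Icc (0 : Fin p → ℝ) u := Set.mem_Icc.mpr ⟨hxI.1, hxu_le⟩
  have hymem : y ∈ Icc v (1 : Fin p → ℝ) := Set.mem_Icc.mpr ⟨hvy_le, hyI.2⟩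
  have hfu : f u = 1 := by
    rcases hf.2 u huI with h | h
    · exact absurd (Set.mem_union_left _ (Set.mem_biUnion (Set.mem_sep hug h) hxmem)) hxn
    · exact h
  have hfv : f v = -1 := by
    rcases hf.2 v hvI with h | h
    · exact h
    · exact absurd (Set.mem_union_right _ (Set.mem_biUnion (Set.mem_sep hvg h) hymem)) hyn
  have := hf.1 huI hvI huv
  rw [hfu, hfv] at this
  linarith

lemma idxG_le {N p : ℕ} (hp : 1 ≤ p) (hN : 0 < N) {x : Fin p → ℝ}
    (hx : ∀ k, ∃ i : ℕ, i ≤ N ∧ x k = (i : ℝ) / (N : ℝ)) (k : Fin p) :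
    idxG N hp x k ≤ N :=
  le_trans (Nat.sub_le _ _) (grid_idx hN hx k).1

lemma idxG_kMin {N p : ℕ} (hp : 1 ≤ p) (x : Fin p → ℝ) :
    idxG N hp x (kMin N hp x) = 0 := by
  unfold idxG
  rw [kMin_spec]
  omega

end RGAux

open RGAux

/-- Single refinement step bound: with `m = 2^l`, the number of points of the refined
grid `{i/(2m)}^p` lying in the uncertain region of the coarse grid `{i/m}^p` is at most
`p (2m + 1)^(p-1)`. -/
theorem refined_grid_uncertain_card_le (p l : ℕ) (hp : 1 ≤ p)
    (f : (Fin p → ℝ) → ℝ) (hf : f ∈ OmegaSet p) :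
    (dyGrid p (2 * 2 ^ l) ∩ uncertainRegion p (dyGrid p (2 ^ l)) f).ncard
      ≤ p * (2 * 2 ^ l + 1) ^ (p - 1) := by
  classical
  set N := 2 * 2 ^ l with hNdef
  have hN : 0 < N := by positivity
  set S := dyGrid p N ∩ uncertainRegion p (dyGrid p (2 ^ l)) f with hS
  have hpe : p - 1 + 1 = p := Nat.succ_pred_eq_of_pos hp
  have hcount : ∀ F : (Fin p → ℝ) → Fin p × (Fin (p - 1) → Fin (N + 1)),
      Set.InjOn F S → S.ncard ≤ p * (N + 1) ^ (p - 1) := by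
    intro F hinj
    calc S.ncard = (F '' S).ncard := (Set.ncard_image_of_injOn hinj).symm
      _ ≤ (Set.univ : Set (Fin p × (Fin (p - 1) → Fin (N + 1)))).ncard :=
          Set.ncard_le_ncard (Set.subset_univ _) Set.finite_univ
      _ = p * (N + 1) ^ (p - 1) := by
          rw [Set.ncard_univ, Nat.card_eq_fintype_card]
          simp
  apply hcount (fun x =>
    (kMin N hp x, fun j => ⟨min (idxG N hp x
        (Fin.cast hpe ((Fin.cast hpe.symm (kMin N hp x)).succAbove j))) N,
      Nat.lt_succ_of_le (min_le_right _ _)⟩))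
  intro x hxS y hyS hxy
  rw [Prod.ext_iff] at hxy
  obtain ⟨hk, hsnd⟩ := hxy
  simp only at hk hsnd
  -- the shifted index functions agree
  have hgk : ∀ k2, idxG N hp x k2 = idxG N hp y k2 := by
    intro k2
    by_cases hk2 : k2 = kMin N hp x
    · rw [hk2, idxG_kMin, hk, idxG_kMin]
    · have hne : Fin.cast hpe.symm k2 ≠ Fin.cast hpe.symm (kMin N hp x) := by
        intro h
        exact hk2 (by simpa using congrArg (Fin.cast hpe) h)
      obtain ⟨j, hj⟩ := Fin.exists_succAbove_eq hne
      have hval := congrArg Fin.val (congrFun hsnd j)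
      simp only at hval
      rw [← hk] at hval
      rw [hj] at hval
      have hcc : Fin.cast hpe (Fin.cast hpe.symm k2) = k2 := by
        apply Fin.ext; simp
      rw [hcc] at hval
      have h1 := idxG_le hp hN hxS.1 k2
      have h2 := idxG_le hp hN hyS.1 k2
      omega
  have haGx : ∀ k, idxA N x k = idxG N hp x k + idxMin N hp x := by
    intro k
    have := idxMin_le N hp x k
    unfold RGAux.idxG
    omega
  have haGy : ∀ k, idxA N y k = idxG N hp y k + idxMin N hp y := by
    intro k
    have := idxMin_le N hp y k
    unfold RGAux.idxG
    omega
  rcases le_or_gt (idxMin N hp x) (idxMin N hp y) with hle | hlt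
  · rcases Nat.eq_or_lt_of_le hle with heq | hlt
    · -- equal minima: indices equal, so x = y
      funext k
      rw [(grid_idx hN hxS.1 k).2, (grid_idx hN hyS.1 k).2, haGx, haGy, hgk, heq]
    · exact absurd (key (l := l) hf hxS hyS (t := idxMin N hp y - idxMin N hp x)
        (by omega) (fun k => by rw [haGx, haGy, hgk]; omega)) (not_false)
  · exact absurd (key (l := l) hf hyS hxS (t := idxMin N hp x - idxMin N hp y)
      (by omega) (fun k => by rw [haGx, haGy, hgk]; omega)) (not_false)
end

section
/- Let p = 1 and n ≥ 1, and let X_1, …, X_n be independent random points uniformly distributed on [0,1]. Then sup_{f ∈ Ω} E[ V(U({X_1,…,X_n}, f)) ] = (2 − 2^{−n})/(n + 1), and the supremum is attained by the monotone function f(x) = −1 for x < 1/2 and f(x) = 1 for x ≥ 1/2. -/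
open MeasureTheory Set

/-- The uniform distribution on `[0,1]`. -/
noncomputable def unif : Measure ℝ := volume.restrict (Icc 0 1)

lemma unif_univ : unif univ = 1 := by simp [unif, Real.volume_Icc]

instance : IsProbabilityMeasure unif := ⟨unif_univ⟩

lemma unif_bad (t s : ℝ) (ht : t ∈ Icc (0:ℝ) 1) (hs : s ∈ Icc (0:ℝ) 1)
    (C : Set ℝ) (h1 : Ioi t ⊆ C) (h2 : C ⊆ Ici t) :
    unif {x | (x < t ∧ s ≤ x) ∨ (x ∈ C ∧ x ≤ s)} = ENNReal.ofReal |s - t| := by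
  have key : ∀ u : Set ℝ, volume u = ENNReal.ofReal |s - t| →
      u ⊆ {x | (x < t ∧ s ≤ x) ∨ (x ∈ C ∧ x ≤ s)} → u ⊆ Icc 0 1 →
      ({x | (x < t ∧ s ≤ x) ∨ (x ∈ C ∧ x ≤ s)} ∩ Icc 0 1) ⊆ Icc (min s t) (max s t) →
      unif {x | (x < t ∧ s ≤ x) ∨ (x ∈ C ∧ x ≤ s)} = ENNReal.ofReal |s - t| := by
    intro u hu hsub hsub2 hup
    rw [unif, Measure.restrict_apply' measurableSet_Icc]
    refine le_antisymm ?_ ?_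
    · calc volume ({x | (x < t ∧ s ≤ x) ∨ (x ∈ C ∧ x ≤ s)} ∩ Icc 0 1)
          ≤ volume (Icc (min s t) (max s t)) := measure_mono hup
        _ = ENNReal.ofReal |s - t| := by
            rw [Real.volume_Icc]
            congr 1
            rcases le_total s t with h | h
            · rw [min_eq_left h, max_eq_right h, abs_of_nonpos (by linarith)]; ring
            · rw [min_eq_right h, max_eq_left h, abs_of_nonneg (by linarith)]
    · rw [← hu]
      exact measure_mono (subset_inter hsub hsub2)
  rcases le_total s t with h | h
  · refine key (Ico s t) ?_ ?_ ?_ ?_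
    · rw [Real.volume_Ico]; congr 1
      rw [abs_of_nonpos (by linarith)]; ring
    · intro x hx; exact Or.inl ⟨hx.2, hx.1⟩
    · intro x hx; exact ⟨le_trans hs.1 hx.1, le_trans (le_of_lt hx.2) ht.2⟩
    · rintro x ⟨(⟨hxt, hsx⟩ | ⟨hxC, hxs⟩), _⟩
      · exact ⟨le_trans (min_le_left _ _) hsx, le_trans (le_of_lt hxt) (le_max_right _ _)⟩
      · have htx : t ≤ x := h2 hxC
        have hx : x = t := le_antisymm (le_trans hxs h) htx
        subst hx
        exact ⟨min_le_right _ _, le_max_right _ _⟩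
  · refine key (Ioc t s) ?_ ?_ ?_ ?_
    · rw [Real.volume_Ioc]; congr 1
      rw [abs_of_nonneg (by linarith)]
    · intro x hx; exact Or.inr ⟨h1 hx.1, hx.2⟩
    · intro x hx; exact ⟨le_trans ht.1 (le_of_lt hx.1), le_trans hx.2 hs.2⟩
    · rintro x ⟨(⟨hxt, hsx⟩ | ⟨hxC, hxs⟩), _⟩
      · exact absurd (lt_of_le_of_lt (le_trans h hsx) hxt) (lt_irrefl t)
      · exact ⟨le_trans (min_le_right _ _) (h2 hxC), le_trans hxs (le_max_left _ _)⟩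

lemma unif_notbad (t s : ℝ) (ht : t ∈ Icc (0:ℝ) 1) (hs : s ∈ Icc (0:ℝ) 1)
    (C : Set ℝ) (hC : MeasurableSet C) (h1 : Ioi t ⊆ C) (h2 : C ⊆ Ici t) :
    unif {x | ¬ ((x < t ∧ s ≤ x) ∨ (x ∈ C ∧ x ≤ s))} = ENNReal.ofReal (1 - |s - t|) := by
  have hmeas : MeasurableSet {x : ℝ | (x < t ∧ s ≤ x) ∨ (x ∈ C ∧ x ≤ s)} := by
    apply MeasurableSet.union
    · exact (measurableSet_lt measurable_id measurable_const).inter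
        (measurableSet_le measurable_const measurable_id)
    · exact hC.inter (measurableSet_le measurable_id measurable_const)
  have hcompl : {x : ℝ | ¬ ((x < t ∧ s ≤ x) ∨ (x ∈ C ∧ x ≤ s))}
      = {x : ℝ | (x < t ∧ s ≤ x) ∨ (x ∈ C ∧ x ≤ s)}ᶜ := rfl
  rw [hcompl, measure_compl hmeas (measure_ne_top _ _), unif_univ,
    unif_bad t s ht hs C h1 h2]
  rw [← ENNReal.ofReal_one, ← ENNReal.ofReal_sub _ (abs_nonneg _)]

open intervalIntegral in
lemma Jlem (n : ℕ) (t : ℝ) (ht : t ∈ Icc (0:ℝ) 1) :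
    ∫ s in (0:ℝ)..1, (1 - |s - t|)^n
      = (2 - t^(n+1) - (1-t)^(n+1)) / (n+1) := by
  obtain ⟨ht0, ht1⟩ := ht
  have hcont : Continuous fun s : ℝ => (1 - |s - t|)^n := by fun_prop
  have hint : ∀ a b : ℝ, IntervalIntegrable (fun s : ℝ => (1 - |s - t|)^n) volume a b :=
    fun a b => hcont.intervalIntegrable a b
  have hsplit := integral_add_adjacent_intervals (a := 0) (b := t) (c := 1)
    (hint 0 t) (hint t 1)
  have h1 : ∫ s in (0:ℝ)..t, (1 - |s - t|)^n = (1 - (1-t)^(n+1)) / (n+1) := by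
    have e1 : ∫ s in (0:ℝ)..t, (1 - |s - t|)^n = ∫ s in (0:ℝ)..t, (s + (1-t))^n := by
      apply integral_congr
      intro s hs
      rw [uIcc_of_le ht0] at hs
      have h : |s - t| = t - s := by
        rw [abs_of_nonpos (by linarith [hs.2] : s - t ≤ 0)]; ring
      simp only [h]; ring
    rw [e1, integral_comp_add_right (fun x => x^n) (1-t), integral_pow]
    norm_num
  have h2 : ∫ s in t..(1:ℝ), (1 - |s - t|)^n = (1 - t^(n+1)) / (n+1) := by
    have e1 : ∫ s in t..(1:ℝ), (1 - |s - t|)^n = ∫ s in t..(1:ℝ), ((1+t) - s)^n := by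
      apply integral_congr
      intro s hs
      rw [uIcc_of_le ht1] at hs
      have h : |s - t| = s - t := abs_of_nonneg (by linarith [hs.1])
      simp only [h]; ring
    rw [e1, integral_comp_sub_left (fun x => x^n) (1+t), integral_pow]
    norm_num
  rw [← hsplit, h1, h2]
  ring

lemma core (n : ℕ) (t : ℝ) (ht : t ∈ Icc (0:ℝ) 1)
    (C : Set ℝ) (hC : MeasurableSet C) (h1 : Ioi t ⊆ C) (h2 : C ⊆ Ici t) :
    ∫⁻ ω : Fin n → ℝ,
        volume (Icc (0:ℝ) 1 ∩ {s | ∀ i, ¬ ((ω i < t ∧ s ≤ ω i) ∨ (ω i ∈ C ∧ ω i ≤ s))})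
        ∂(Measure.pi fun _ => unif)
      = ENNReal.ofReal ((2 - t^(n+1) - (1-t)^(n+1)) / (n+1)) := by
  set π : Measure (Fin n → ℝ) := Measure.pi fun _ => unif with hπ
  have hBm : MeasurableSet {q : ℝ × ℝ | (q.1 < t ∧ q.2 ≤ q.1) ∨ (q.1 ∈ C ∧ q.1 ≤ q.2)} := by
    apply MeasurableSet.union
    · exact (measurableSet_lt measurable_fst measurable_const).inter
        (measurableSet_le measurable_snd measurable_fst)
    · exact (hC.preimage measurable_fst).inter (measurableSet_le measurable_fst measurable_snd)
  set S : Set ((Fin n → ℝ) × ℝ) :=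
    {p | p.2 ∈ Icc (0:ℝ) 1 ∧ ∀ i, ¬ ((p.1 i < t ∧ p.2 ≤ p.1 i) ∨ (p.1 i ∈ C ∧ p.1 i ≤ p.2))}
    with hSdef
  have hS : MeasurableSet S := by
    have hrw : S = (Prod.snd ⁻¹' Icc (0:ℝ) 1) ∩
        ⋂ i, (fun p : (Fin n → ℝ) × ℝ => (p.1 i, p.2)) ⁻¹'
          {q : ℝ × ℝ | (q.1 < t ∧ q.2 ≤ q.1) ∨ (q.1 ∈ C ∧ q.1 ≤ q.2)}ᶜ := by
      ext p
      simp only [hSdef, mem_setOf_eq, mem_inter_iff, mem_preimage, mem_iInter, mem_compl_iff]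
    rw [hrw]
    exact (measurable_snd measurableSet_Icc).inter
      (MeasurableSet.iInter fun i => (hBm.compl).preimage
        (((measurable_pi_apply i).comp measurable_fst).prodMk measurable_snd))
  have step1 : ∀ ω : Fin n → ℝ,
      volume (Icc (0:ℝ) 1 ∩ {s | ∀ i, ¬ ((ω i < t ∧ s ≤ ω i) ∨ (ω i ∈ C ∧ ω i ≤ s))})
        = ∫⁻ s, S.indicator 1 (ω, s) := by
    intro ω
    have hpre : Prod.mk ω ⁻¹' S
        = Icc (0:ℝ) 1 ∩ {s | ∀ i, ¬ ((ω i < t ∧ s ≤ ω i) ∨ (ω i ∈ C ∧ ω i ≤ s))} := by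
      ext s
      simp only [hSdef, mem_preimage, mem_setOf_eq, mem_inter_iff]
    rw [← hpre, ← lintegral_indicator_one (hS.preimage measurable_prodMk_left)]
    rfl
  have step2 : ∀ s : ℝ, ∫⁻ ω, S.indicator 1 (ω, s) ∂π
      = (Icc (0:ℝ) 1).indicator (fun s => ENNReal.ofReal (1 - |s - t|) ^ n) s := by
    intro s
    by_cases hs : s ∈ Icc (0:ℝ) 1
    · rw [indicator_of_mem hs]
      have hTm : MeasurableSet {x : ℝ | ¬ ((x < t ∧ s ≤ x) ∨ (x ∈ C ∧ x ≤ s))} := by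
        apply MeasurableSet.compl (MeasurableSet.union _ _)
        · exact (measurableSet_lt measurable_id measurable_const).inter
            (measurableSet_le measurable_const measurable_id)
        · exact hC.inter (measurableSet_le measurable_id measurable_const)
      have epts : ∀ ω : Fin n → ℝ, S.indicator (1 : (Fin n → ℝ) × ℝ → ENNReal) (ω, s)
          = (univ.pi fun _ : Fin n => {x : ℝ | ¬ ((x < t ∧ s ≤ x) ∨ (x ∈ C ∧ x ≤ s))}).indicator
              (1 : (Fin n → ℝ) → ENNReal) ω := by
        intro ω
        by_cases hω : ∀ i, ¬ ((ω i < t ∧ s ≤ ω i) ∨ (ω i ∈ C ∧ ω i ≤ s))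
        · have hmem : ω ∈ univ.pi (fun _ : Fin n =>
              {x : ℝ | ¬ ((x < t ∧ s ≤ x) ∨ (x ∈ C ∧ x ≤ s))}) := fun i _ => hω i
          rw [indicator_of_mem (show (ω, s) ∈ S from ⟨hs, hω⟩), indicator_of_mem hmem]
          rfl
        · have hnot : ω ∉ univ.pi (fun _ : Fin n =>
              {x : ℝ | ¬ ((x < t ∧ s ≤ x) ∨ (x ∈ C ∧ x ≤ s))}) :=
            fun h => hω fun i => h i (mem_univ i)
          rw [indicator_of_notMem (show (ω, s) ∉ S from fun h => hω h.2),
            indicator_of_notMem hnot]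
      rw [lintegral_congr epts,
        lintegral_indicator_one (MeasurableSet.univ_pi fun _ => hTm), hπ, Measure.pi_pi]
      rw [unif_notbad t s ht hs C hC h1 h2]
      simp [Finset.prod_const]
    · rw [indicator_of_notMem hs]
      have epts : ∀ ω : Fin n → ℝ, S.indicator (1 : (Fin n → ℝ) × ℝ → ENNReal) (ω, s) = 0 :=
        fun ω => indicator_of_notMem (fun h => hs h.1) 1
      rw [lintegral_congr epts, lintegral_zero]
  calc ∫⁻ ω, volume (Icc (0:ℝ) 1 ∩ {s | ∀ i, ¬ ((ω i < t ∧ s ≤ ω i) ∨ (ω i ∈ C ∧ ω i ≤ s))}) ∂π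
      = ∫⁻ ω, ∫⁻ s, S.indicator 1 (ω, s) ∂volume ∂π := lintegral_congr step1
    _ = ∫⁻ s, ∫⁻ ω, S.indicator 1 (ω, s) ∂π ∂volume :=
        lintegral_lintegral_swap ((measurable_one.indicator hS).aemeasurable)
    _ = ∫⁻ s, (Icc (0:ℝ) 1).indicator (fun s => ENNReal.ofReal (1 - |s - t|) ^ n) s ∂volume :=
        lintegral_congr step2
    _ = ∫⁻ s in Icc (0:ℝ) 1, ENNReal.ofReal (1 - |s - t|) ^ n ∂volume := by
        rw [lintegral_indicator measurableSet_Icc]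
    _ = ∫⁻ s in Icc (0:ℝ) 1, ENNReal.ofReal ((1 - |s - t|) ^ n) ∂volume := by
        apply setLIntegral_congr_fun measurableSet_Icc
        intro s hs
        have hnn : 0 ≤ 1 - |s - t| := by
          rcases hs with ⟨h0, h1'⟩
          rcases ht with ⟨ht0, ht1⟩
          rw [sub_nonneg, abs_le]
          constructor <;> linarith
        dsimp only
        rw [ENNReal.ofReal_pow hnn]
    _ = ENNReal.ofReal (∫ s in Icc (0:ℝ) 1, (1 - |s - t|) ^ n) := by
        rw [← ofReal_integral_eq_lintegral_ofReal]
        · exact (by fun_prop : Continuous fun s : ℝ => (1 - |s - t|)^n).integrableOn_Icc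
        · filter_upwards [ae_restrict_mem measurableSet_Icc] with s hs
          have hnn : 0 ≤ 1 - |s - t| := by
            rcases hs with ⟨h0, h1'⟩
            rcases ht with ⟨ht0, ht1⟩
            rw [sub_nonneg, abs_le]
            constructor <;> linarith
          positivity
    _ = ENNReal.ofReal ((2 - t^(n+1) - (1-t)^(n+1)) / (n+1)) := by
        rw [integral_Icc_eq_integral_Ioc, ← intervalIntegral.integral_of_le zero_le_one,
          Jlem n t ht]

lemma half_pow (n : ℕ) : (2:ℝ) ^ (-(n:ℤ)) = 2 * (1/2:ℝ)^(n+1) := by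
  rw [zpow_neg, zpow_natCast, one_div, inv_pow, pow_succ]
  rw [mul_inv]
  field_simp

/-- Theorem 5, case `p = 1`: for `n` i.i.d. uniform points on `[0,1]`,
`sup_{f ∈ Ω} E[V(U({X₁,…,Xₙ}, f))] = (2 - 2^(-n))/(n+1)`, attained by the monotone
function which is `-1` exactly on `[0, 1/2)`. -/
theorem monte_carlo_expected_uncertain_volume (n : ℕ) (hn : 1 ≤ n) :
    (⨆ f ∈ Omega1,
        ∫⁻ ω : Fin n → ℝ, volume (uncertainRegion1 (Set.range ω) f)
          ∂(Measure.pi fun _ => unif))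
      = ENNReal.ofReal ((2 - (2 : ℝ) ^ (-(n : ℤ))) / (n + 1)) ∧
    (∫⁻ ω : Fin n → ℝ,
        volume (uncertainRegion1 (Set.range ω)
          (fun x => if x < 1 / 2 then (-1 : ℝ) else 1))
        ∂(Measure.pi fun _ => unif))
      = ENNReal.ofReal ((2 - (2 : ℝ) ^ (-(n : ℤ))) / (n + 1)) := by
  set π : Measure (Fin n → ℝ) := Measure.pi fun _ => unif with hπ
  set fstar : ℝ → ℝ := fun x => if x < 1 / 2 then (-1 : ℝ) else 1 with hfstar
  have hhalf : (1/2 : ℝ) ∈ Icc (0:ℝ) 1 := ⟨by norm_num, by norm_num⟩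
  have hval_half : ENNReal.ofReal ((2 - (1/2:ℝ)^(n+1) - (1-(1/2:ℝ))^(n+1)) / (n+1))
      = ENNReal.ofReal ((2 - (2 : ℝ) ^ (-(n : ℤ))) / (n + 1)) := by
    congr 2
    rw [half_pow]
    norm_num
    ring
  -- Part 2
  have part2 : (∫⁻ ω : Fin n → ℝ, volume (uncertainRegion1 (Set.range ω) fstar) ∂π)
      = ENNReal.ofReal ((2 - (2 : ℝ) ^ (-(n : ℤ))) / (n + 1)) := by
    have hW := core n (1/2) hhalf (Ioi (1/2)) measurableSet_Ioi (subset_refl _)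
      Ioi_subset_Ici_self
    have hW' := core n (1/2) hhalf (Ici (1/2)) measurableSet_Ici Ioi_subset_Ici_self
      (subset_refl _)
    have hsub2 : ∀ ω : Fin n → ℝ, uncertainRegion1 (Set.range ω) fstar ⊆
        Icc (0:ℝ) 1 ∩ {s | ∀ i, ¬ ((ω i < 1/2 ∧ s ≤ ω i) ∨ (ω i ∈ Ioi (1/2:ℝ) ∧ ω i ≤ s))} := by
      intro ω s hs
      obtain ⟨hs1, hs2⟩ := hs
      refine ⟨hs1, fun i => ?_⟩
      rintro (⟨hlt, hle⟩ | ⟨hgt, hle⟩)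
      · have hfneg : fstar (ω i) = -1 := by
          simp only [hfstar]; rw [if_pos hlt]
        exact hs2 (Or.inl (mem_iUnion₂.2 ⟨ω i, ⟨⟨i, rfl⟩, hfneg⟩, ⟨hs1.1, hle⟩⟩))
      · have hf1 : fstar (ω i) = 1 := by
          simp only [hfstar]
          rw [if_neg (not_lt.2 (le_of_lt hgt))]
        exact hs2 (Or.inr (mem_iUnion₂.2 ⟨ω i, ⟨⟨i, rfl⟩, hf1⟩, ⟨hle, hs1.2⟩⟩))
    have hsub1 : ∀ ω : Fin n → ℝ,
        Icc (0:ℝ) 1 ∩ {s | ∀ i, ¬ ((ω i < 1/2 ∧ s ≤ ω i) ∨ (ω i ∈ Ici (1/2:ℝ) ∧ ω i ≤ s))}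
          ⊆ uncertainRegion1 (Set.range ω) fstar := by
      intro ω s hs
      obtain ⟨hs1, hs2⟩ := hs
      refine ⟨hs1, fun hmem => ?_⟩
      rcases hmem with hmem | hmem
      · obtain ⟨x, ⟨⟨i, rfl⟩, hfx⟩, hsx⟩ := mem_iUnion₂.1 hmem
        have hlt : ω i < 1/2 := by
          by_contra hcon
          simp only [hfstar, if_neg hcon] at hfx
          norm_num at hfx
        exact hs2 i (Or.inl ⟨hlt, hsx.2⟩)
      · obtain ⟨x, ⟨⟨i, rfl⟩, hfx⟩, hsx⟩ := mem_iUnion₂.1 hmem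
        have hge : ω i ∈ Ici (1/2:ℝ) := by
          by_contra hcon
          simp only [hfstar, if_pos (not_le.1 (fun h : (1/2:ℝ) ≤ ω i => hcon h))] at hfx
          norm_num at hfx
        exact hs2 i (Or.inr ⟨hge, hsx.1⟩)
    refine le_antisymm ?_ ?_
    · calc (∫⁻ ω : Fin n → ℝ, volume (uncertainRegion1 (Set.range ω) fstar) ∂π)
          ≤ ∫⁻ ω : Fin n → ℝ, volume (Icc (0:ℝ) 1 ∩
              {s | ∀ i, ¬ ((ω i < 1/2 ∧ s ≤ ω i) ∨ (ω i ∈ Ioi (1/2:ℝ) ∧ ω i ≤ s))}) ∂π :=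
            lintegral_mono fun ω => measure_mono (hsub2 ω)
        _ = ENNReal.ofReal ((2 - (2 : ℝ) ^ (-(n : ℤ))) / (n + 1)) := by rw [hW, hval_half]
    · calc ENNReal.ofReal ((2 - (2 : ℝ) ^ (-(n : ℤ))) / (n + 1))
          = ∫⁻ ω : Fin n → ℝ, volume (Icc (0:ℝ) 1 ∩
              {s | ∀ i, ¬ ((ω i < 1/2 ∧ s ≤ ω i) ∨ (ω i ∈ Ici (1/2:ℝ) ∧ ω i ≤ s))}) ∂π := by
            rw [hW', hval_half]
        _ ≤ ∫⁻ ω : Fin n → ℝ, volume (uncertainRegion1 (Set.range ω) fstar) ∂π :=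
            lintegral_mono fun ω => measure_mono (hsub1 ω)
  have hfstar_mem : fstar ∈ Omega1 := by
    constructor
    · intro x hx y hy hxy
      simp only [hfstar]
      split_ifs with h1 h2 h2
      · norm_num
      · norm_num
      · exact absurd (lt_of_le_of_lt hxy h2) h1
      · norm_num
    · intro x _
      simp only [hfstar]
      split_ifs
      · exact Or.inl rfl
      · exact Or.inr rfl
  -- a.e. all coordinates in [0,1]
  have hae : ∀ᵐ ω ∂π, ∀ i, ω i ∈ Icc (0:ℝ) 1 := by
    have hms : MeasurableSet (univ.pi fun _ : Fin n => Icc (0:ℝ) 1) :=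
      MeasurableSet.univ_pi fun _ => measurableSet_Icc
    have hpi1 : π (univ.pi fun _ : Fin n => Icc (0:ℝ) 1) = 1 := by
      rw [hπ, Measure.pi_pi]
      have : unif (Icc (0:ℝ) 1) = 1 := by
        rw [unif, Measure.restrict_apply' measurableSet_Icc]
        simp [Real.volume_Icc]
      simp [this]
    have heq : {ω : Fin n → ℝ | ¬ ∀ i, ω i ∈ Icc (0:ℝ) 1}
        = (univ.pi fun _ : Fin n => Icc (0:ℝ) 1)ᶜ := by
      ext ω
      simp only [mem_setOf_eq, mem_compl_iff, mem_pi, mem_univ, true_implies]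
    rw [ae_iff, heq, measure_compl hms (measure_ne_top _ _), hpi1, measure_univ]
    simp
  -- Part 1
  have part1 : (⨆ f ∈ Omega1,
      ∫⁻ ω : Fin n → ℝ, volume (uncertainRegion1 (Set.range ω) f) ∂π)
      = ENNReal.ofReal ((2 - (2 : ℝ) ^ (-(n : ℤ))) / (n + 1)) := by
    refine le_antisymm ?_ ?_
    · refine iSup₂_le fun f hf => ?_
      obtain ⟨hmono, hvals⟩ := hf
      obtain ⟨t, ht, P1, P2⟩ : ∃ t ∈ Icc (0:ℝ) 1,
          (∀ x ∈ Icc (0:ℝ) 1, x < t → f x = -1) ∧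
          (∀ x ∈ Icc (0:ℝ) 1, t < x → f x = 1) := by
        by_cases hne : ({x ∈ Icc (0:ℝ) 1 | f x = -1} : Set ℝ).Nonempty
        · set Sneg : Set ℝ := {x ∈ Icc (0:ℝ) 1 | f x = -1} with hSneg
          have hbdd : BddAbove Sneg := ⟨1, fun x hx => hx.1.2⟩
          refine ⟨sSup Sneg, ⟨?_, csSup_le hne fun x hx => hx.1.2⟩, ?_, ?_⟩
          · obtain ⟨x0, hx0⟩ := hne
            exact le_trans hx0.1.1 (le_csSup hbdd hx0)
          · intro x hx hlt
            obtain ⟨y, hy, hxy⟩ := exists_lt_of_lt_csSup hne hlt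
            have hle := hmono hx hy.1 (le_of_lt hxy)
            rw [hy.2] at hle
            rcases hvals x hx with h | h
            · exact h
            · rw [h] at hle; linarith
          · intro x hx hlt
            have hnot : x ∉ Sneg := fun hmem => absurd (le_csSup hbdd hmem) (not_le.2 hlt)
            rcases hvals x hx with h | h
            · exact absurd (⟨hx, h⟩ : x ∈ Sneg) hnot
            · exact h
        · refine ⟨0, ⟨le_refl 0, zero_le_one⟩, fun x hx hlt => absurd hlt (not_lt.2 hx.1),
            fun x hx _ => ?_⟩
          rcases hvals x hx with h | h
          · exact absurd ⟨x, hx, h⟩ hne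
          · exact h
      have hsub : ∀ ω : Fin n → ℝ, (∀ i, ω i ∈ Icc (0:ℝ) 1) →
          uncertainRegion1 (Set.range ω) f ⊆
          Icc (0:ℝ) 1 ∩ {s | ∀ i, ¬ ((ω i < t ∧ s ≤ ω i) ∨ (ω i ∈ Ioi t ∧ ω i ≤ s))} := by
        intro ω hω s hs
        obtain ⟨hs1, hs2⟩ := hs
        refine ⟨hs1, fun i => ?_⟩
        rintro (⟨hlt, hle⟩ | ⟨hgt, hle⟩)
        · exact hs2 (Or.inl (mem_iUnion₂.2 ⟨ω i, ⟨⟨i, rfl⟩, P1 _ (hω i) hlt⟩,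
            ⟨hs1.1, hle⟩⟩))
        · exact hs2 (Or.inr (mem_iUnion₂.2 ⟨ω i, ⟨⟨i, rfl⟩, P2 _ (hω i) hgt⟩,
            ⟨hle, hs1.2⟩⟩))
      have hbound : ENNReal.ofReal ((2 - t^(n+1) - (1-t)^(n+1)) / (n+1))
          ≤ ENNReal.ofReal ((2 - (2 : ℝ) ^ (-(n : ℤ))) / (n + 1)) := by
        apply ENNReal.ofReal_le_ofReal
        refine div_le_div_of_nonneg_right ?_ (by positivity)
        have hc := (convexOn_pow (n+1)).2 (show t ∈ Ici (0:ℝ) from ht.1)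
          (show (1-t) ∈ Ici (0:ℝ) by simp; linarith [ht.2])
          (by norm_num : (0:ℝ) ≤ 1/2) (by norm_num : (0:ℝ) ≤ 1/2) (by norm_num)
        simp only [smul_eq_mul] at hc
        have he : (1/2:ℝ)*t + (1/2)*(1-t) = 1/2 := by ring
        rw [he] at hc
        rw [half_pow]
        linarith
      calc (∫⁻ ω : Fin n → ℝ, volume (uncertainRegion1 (Set.range ω) f) ∂π)
          ≤ ∫⁻ ω : Fin n → ℝ, volume (Icc (0:ℝ) 1 ∩
              {s | ∀ i, ¬ ((ω i < t ∧ s ≤ ω i) ∨ (ω i ∈ Ioi t ∧ ω i ≤ s))}) ∂π := by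
            apply lintegral_mono_ae
            filter_upwards [hae] with ω hω
            exact measure_mono (hsub ω hω)
        _ = ENNReal.ofReal ((2 - t^(n+1) - (1-t)^(n+1)) / (n+1)) :=
            core n t ht (Ioi t) measurableSet_Ioi (subset_refl _) Ioi_subset_Ici_self
        _ ≤ ENNReal.ofReal ((2 - (2 : ℝ) ^ (-(n : ℤ))) / (n + 1)) := hbound
    · rw [← part2]
      exact le_biSup
        (fun f => ∫⁻ ω : Fin n → ℝ, volume (uncertainRegion1 (Set.range ω) f) ∂π)
        hfstar_mem
  exact ⟨part1, part2⟩
end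

section
/- Let p = 1 and n ≥ 0, let X_1, …, X_n be independent random points uniformly distributed on [0,1], and let f ∈ Ω be monotone with z := sup{x ∈ [0,1] : f(x) = −1} ∈ (0,1). Then E[ V(U({X_1,…,X_n}, f)) ] = (2 − (1−z)^{n+1} − z^{n+1})/(n + 1). -/
open MeasureTheory Set

instance : SigmaFinite unif := by unfold unif; infer_instance
instance : SFinite unif := by unfold unif; infer_instance

namespace MCAux

variable {n : ℕ} {z : ℝ}

/-- the "allowed" product set -/
def Wset (n : ℕ) (z : ℝ) : Set ((Fin n → ℝ) × ℝ) :=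
  {p | (0 ≤ p.2 ∧ p.2 ≤ 1) ∧ ∀ i, ¬((p.1 i < z ∧ 0 ≤ p.2 ∧ p.2 ≤ p.1 i) ∨
       (z ≤ p.1 i ∧ p.1 i ≤ p.2 ∧ p.2 ≤ 1))}

lemma measurable_Wset : MeasurableSet (Wset n z) := by
  have hm1 : ∀ i : Fin n, Measurable fun p : (Fin n → ℝ) × ℝ => p.1 i :=
    fun i => (measurable_pi_apply i).comp measurable_fst
  have hmt : Measurable fun p : (Fin n → ℝ) × ℝ => p.2 := measurable_snd
  have heq : Wset n z = ({p : (Fin n → ℝ) × ℝ | 0 ≤ p.2} ∩ {p | p.2 ≤ 1}) ∩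
      ⋂ i, (({p : (Fin n → ℝ) × ℝ | p.1 i < z} ∩ ({p | 0 ≤ p.2} ∩ {p | p.2 ≤ p.1 i})) ∪
            ({p : (Fin n → ℝ) × ℝ | z ≤ p.1 i} ∩ ({p | p.1 i ≤ p.2} ∩ {p | p.2 ≤ 1})))ᶜ := by
    ext p
    simp only [Wset, mem_setOf_eq, mem_inter_iff, mem_iInter, mem_compl_iff, mem_union]
  rw [heq]
  refine (((measurableSet_le measurable_const hmt).inter
      (measurableSet_le hmt measurable_const))).inter
    (MeasurableSet.iInter fun i => (MeasurableSet.union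
      ((measurableSet_lt (hm1 i) measurable_const).inter
        ((measurableSet_le measurable_const hmt).inter (measurableSet_le hmt (hm1 i))))
      ((measurableSet_le measurable_const (hm1 i)).inter
        ((measurableSet_le (hm1 i) hmt).inter (measurableSet_le hmt measurable_const)))).compl)

lemma uncertainRegion1_congr {D : Set ℝ} {f g : ℝ → ℝ} (h : ∀ x ∈ D, f x = g x) :
    uncertainRegion1 D f = uncertainRegion1 D g := by
  have h1 : {y ∈ D | f y = -1} = {y ∈ D | g y = -1} := by
    ext y; simp only [mem_setOf_eq]
    exact and_congr_right fun hy => by rw [h y hy]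
  have h2 : {y ∈ D | f y = 1} = {y ∈ D | g y = 1} := by
    ext y; simp only [mem_setOf_eq]
    exact and_congr_right fun hy => by rw [h y hy]
  unfold uncertainRegion1
  rw [h1, h2]

lemma hg_neg (z x : ℝ) : ((if x < z then (-1:ℝ) else 1) = -1) ↔ x < z := by
  by_cases h : x < z <;> simp [h]
  norm_num

lemma hg_pos (z x : ℝ) : ((if x < z then (-1:ℝ) else 1) = 1) ↔ ¬ x < z := by
  by_cases h : x < z <;> simp [h]
  norm_num

lemma slice_eq (ω : Fin n → ℝ) :
    uncertainRegion1 (Set.range ω) (fun x => if x < z then (-1:ℝ) else 1)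
      = {t | (ω, t) ∈ Wset n z} := by
  ext t
  simp only [uncertainRegion1, mem_diff, mem_union, mem_iUnion, exists_prop, mem_setOf_eq,
    mem_range, mem_Icc, Wset]
  constructor
  · rintro ⟨hI, hnot⟩
    refine ⟨hI, fun i hbad => hnot ?_⟩
    rcases hbad with ⟨h1, h2, h3⟩ | ⟨h1, h2, h3⟩
    · exact Or.inl ⟨ω i, ⟨⟨i, rfl⟩, (hg_neg z _).mpr h1⟩, h2, h3⟩
    · exact Or.inr ⟨ω i, ⟨⟨i, rfl⟩, (hg_pos z _).mpr (not_lt.mpr h1)⟩, h2, h3⟩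
  · rintro ⟨hI, hA⟩
    refine ⟨hI, ?_⟩
    rintro (⟨x, ⟨⟨i, rfl⟩, h1⟩, h2, h3⟩ | ⟨x, ⟨⟨i, rfl⟩, h1⟩, h2, h3⟩)
    · exact hA i (Or.inl ⟨(hg_neg z _).mp h1, h2, h3⟩)
    · exact hA i (Or.inr ⟨not_lt.mp ((hg_pos z _).mp h1), h2, h3⟩)

lemma slice2_eq (t : ℝ) (ht0 : (0:ℝ) ≤ t) (ht1 : t ≤ 1) :
    {ω : Fin n → ℝ | (ω, t) ∈ Wset n z} = Set.pi univ (fun _ => (Ico t z ∪ Icc z t)ᶜ) := by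
  ext ω
  simp only [Wset, mem_setOf_eq, Set.mem_pi, mem_univ, forall_true_left, mem_compl_iff,
    mem_union, mem_Ico, mem_Icc, not_or]
  constructor
  · rintro ⟨-, h⟩ i
    exact ⟨fun ⟨h1, h2⟩ => (h i).1 ⟨h2, ht0, h1⟩, fun ⟨h1, h2⟩ => (h i).2 ⟨h1, h2, ht1⟩⟩
  · intro h
    exact ⟨⟨ht0, ht1⟩, fun i =>
      ⟨fun ⟨h1, h2, h3⟩ => (h i).1 ⟨h3, h1⟩, fun ⟨h1, h2, h3⟩ => (h i).2 ⟨h1, h2⟩⟩⟩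

lemma slice2_empty (t : ℝ) (ht : t ∉ Icc (0:ℝ) 1) :
    {ω : Fin n → ℝ | (ω, t) ∈ Wset n z} = ∅ := by
  ext ω
  simp only [Wset, mem_setOf_eq, mem_empty_iff_false, iff_false]
  rintro ⟨hI, -⟩
  exact ht hI

lemma unif_compl (z t : ℝ) (hz' : z ∈ Ioo (0:ℝ) 1) (ht : t ∈ Icc (0:ℝ) 1) :
    unif ((Ico t z ∪ Icc z t)ᶜ) = ENNReal.ofReal (1 - |t - z|) := by
  obtain ⟨ht0, ht1⟩ := ht
  obtain ⟨hz0, hz1⟩ := hz'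
  have hmeas : MeasurableSet (Ico t z ∪ Icc z t) := measurableSet_Ico.union measurableSet_Icc
  have hsub : Ico t z ∪ Icc z t ⊆ Icc 0 1 := by
    rintro x (⟨h1, h2⟩ | ⟨h1, h2⟩) <;> constructor <;> linarith
  have hvol : volume (Ico t z ∪ Icc z t) = ENNReal.ofReal |t - z| := by
    rcases le_total t z with h | h
    · have habs : |t - z| = z - t := by rw [abs_of_nonpos (by linarith)]; ring
      rw [habs]
      refine le_antisymm ?_ ?_
      · refine le_trans (measure_mono (?_ : Ico t z ∪ Icc z t ⊆ Icc t z)) ?_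
        · rintro x (⟨h1, h2⟩ | ⟨h1, h2⟩) <;> constructor <;> linarith
        · rw [Real.volume_Icc]
      · refine le_trans ?_ (measure_mono subset_union_left)
        rw [Real.volume_Ico]
    · have habs : |t - z| = t - z := abs_of_nonneg (by linarith)
      rw [habs]
      refine le_antisymm ?_ ?_
      · refine le_trans (measure_mono (?_ : Ico t z ∪ Icc z t ⊆ Icc z t)) ?_
        · rintro x (⟨h1, h2⟩ | ⟨h1, h2⟩) <;> constructor <;> linarith
        · rw [Real.volume_Icc]
      · refine le_trans ?_ (measure_mono subset_union_right)
        rw [Real.volume_Icc]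
  have h1 : (Ico t z ∪ Icc z t)ᶜ ∩ Icc 0 1 = Icc 0 1 \ (Ico t z ∪ Icc z t) := by
    rw [Set.diff_eq, inter_comm]
  rw [unif, Measure.restrict_apply hmeas.compl, h1,
    measure_diff hsub hmeas.nullMeasurableSet
      (by rw [hvol]; exact ENNReal.ofReal_ne_top),
    hvol, Real.volume_Icc, ← ENNReal.ofReal_sub _ (abs_nonneg _)]
  norm_num

lemma real_integral (n : ℕ) (z : ℝ) (hz' : z ∈ Ioo (0:ℝ) 1) :
    ∫ t in Icc (0:ℝ) 1, (1 - |t - z|)^n = (2 - (1-z)^(n+1) - z^(n+1))/(n+1) := by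
  have hcont : Continuous fun t : ℝ => (1 - |t - z|)^n := by fun_prop
  rw [integral_Icc_eq_integral_Ioc, ← intervalIntegral.integral_of_le (zero_le_one)]
  rw [← intervalIntegral.integral_add_adjacent_intervals
    (hcont.intervalIntegrable 0 z) (hcont.intervalIntegrable z 1)]
  have e1 : (∫ t in (0:ℝ)..z, (1 - |t - z|)^n) = (1 - (1-z)^(n+1))/(n+1) := by
    rw [intervalIntegral.integral_congr (g := fun t => (t + (1-z))^n) ?_]
    · rw [intervalIntegral.integral_comp_add_right (fun x => x^n) (1-z)]
      have h1 : z + (1 - z) = 1 := by ring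
      have h2 : (0:ℝ) + (1 - z) = 1 - z := by ring
      rw [h1, h2, integral_pow, one_pow]
    · intro t ht
      rw [uIcc_of_le hz'.1.le] at ht
      show (1 - |t - z|)^n = (t + (1-z))^n
      rw [abs_of_nonpos (by linarith [ht.2] : t - z ≤ 0)]
      congr 1; ring
  have e2 : (∫ t in z..(1:ℝ), (1 - |t - z|)^n) = (1 - z^(n+1))/(n+1) := by
    rw [intervalIntegral.integral_congr (g := fun t => ((1+z) - t)^n) ?_]
    · rw [intervalIntegral.integral_comp_sub_left (fun x => x^n) (1+z)]
      have h1 : (1:ℝ) + z - 1 = z := by ring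
      have h2 : (1:ℝ) + z - z = 1 := by ring
      rw [h1, h2, integral_pow, one_pow]
    · intro t ht
      rw [uIcc_of_le hz'.2.le] at ht
      show (1 - |t - z|)^n = ((1+z) - t)^n
      rw [abs_of_nonneg (by linarith [ht.1] : 0 ≤ t - z)]
      congr 1; ring
  rw [e1, e2, ← add_div]
  congr 1; ring

lemma main_aux (n : ℕ) (z : ℝ) (hz' : z ∈ Ioo (0:ℝ) 1) :
    (∫⁻ ω : Fin n → ℝ, volume (uncertainRegion1 (Set.range ω)
        (fun x => if x < z then (-1:ℝ) else 1)) ∂(Measure.pi fun _ => unif))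
      = ENNReal.ofReal ((2 - (1 - z) ^ (n + 1) - z ^ (n + 1)) / (n + 1)) := by
  have hW : MeasurableSet (Wset n z) := measurable_Wset
  have key2 : ∀ t : ℝ, (∫⁻ ω, (Wset n z).indicator 1 (ω, t) ∂(Measure.pi fun _ => unif))
      = (Icc (0:ℝ) 1).indicator (fun t => ENNReal.ofReal ((1 - |t - z|)^n)) t := by
    intro t
    have hsl : MeasurableSet {ω : Fin n → ℝ | (ω, t) ∈ Wset n z} :=
      hW.preimage measurable_prodMk_right
    have : (∫⁻ ω, (Wset n z).indicator 1 (ω, t) ∂(Measure.pi fun _ => unif))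
        = Measure.pi (fun _ : Fin n => unif) {ω | (ω, t) ∈ Wset n z} := by
      rw [← lintegral_indicator_one hsl]
      rfl
    rw [this]
    by_cases ht : t ∈ Icc (0:ℝ) 1
    · rw [slice2_eq t ht.1 ht.2, Measure.pi_pi, indicator_of_mem ht]
      have hnn : 0 ≤ 1 - |t - z| := by
        have : |t - z| ≤ 1 := abs_le.mpr
          ⟨by linarith [ht.1, hz'.2], by linarith [ht.2, hz'.1]⟩
        linarith
      simp only [unif_compl z t hz' ht, Finset.prod_const, Finset.card_fin, Finset.card_univ,
        Fintype.card_fin]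
      rw [← ENNReal.ofReal_pow hnn]
    · rw [slice2_empty t ht, indicator_of_notMem ht]
      simp
  have step1 : ∀ ω : Fin n → ℝ,
      volume (uncertainRegion1 (Set.range ω) (fun x => if x < z then (-1:ℝ) else 1))
      = ∫⁻ t, (Wset n z).indicator 1 (ω, t) := by
    intro ω
    have hmeas : MeasurableSet {t | (ω, t) ∈ Wset n z} := hW.preimage measurable_prodMk_left
    rw [slice_eq ω, ← lintegral_indicator_one hmeas]
    rfl
  calc (∫⁻ ω : Fin n → ℝ, volume (uncertainRegion1 (Set.range ω)
          (fun x => if x < z then (-1:ℝ) else 1)) ∂(Measure.pi fun _ => unif))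
      = ∫⁻ ω, ∫⁻ t, (Wset n z).indicator 1 (ω, t) ∂(volume) ∂(Measure.pi fun _ => unif) :=
        lintegral_congr step1
    _ = ∫⁻ t, ∫⁻ ω, (Wset n z).indicator 1 (ω, t) ∂(Measure.pi fun _ => unif) ∂(volume) :=
        lintegral_lintegral_swap ((measurable_one.indicator hW).aemeasurable)
    _ = ∫⁻ t, (Icc (0:ℝ) 1).indicator (fun t => ENNReal.ofReal ((1 - |t - z|)^n)) t :=
        lintegral_congr key2
    _ = ∫⁻ t in Icc (0:ℝ) 1, ENNReal.ofReal ((1 - |t - z|)^n) :=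
        lintegral_indicator measurableSet_Icc _
    _ = ENNReal.ofReal ((2 - (1 - z) ^ (n + 1) - z ^ (n + 1)) / (n + 1)) := by
        have hcont : Continuous fun t : ℝ => (1 - |t - z|)^n := by fun_prop
        have hint : Integrable (fun t : ℝ => (1 - |t - z|)^n)
            (volume.restrict (Icc (0:ℝ) 1)) := hcont.integrableOn_Icc
        have hnn : 0 ≤ᵐ[volume.restrict (Icc (0:ℝ) 1)] fun t : ℝ => (1 - |t - z|)^n := by
          filter_upwards [ae_restrict_mem measurableSet_Icc] with t ht
          have : |t - z| ≤ 1 := abs_le.mpr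
            ⟨by linarith [ht.1, hz'.2], by linarith [ht.2, hz'.1]⟩
          exact pow_nonneg (by linarith) n
        rw [← ofReal_integral_eq_lintegral_ofReal hint hnn, real_integral n z hz']

end MCAux

/-- For `n` i.i.d. uniform points on `[0,1]` and monotone `f` whose transition point
`z = sup {x ∈ [0,1] : f x = -1}` lies in `(0,1)`, the expected uncertain volume equals
`(2 - (1-z)^(n+1) - z^(n+1))/(n+1)`. -/
theorem monte_carlo_expected_uncertain_volume_of_threshold (n : ℕ)
    (f : ℝ → ℝ) (hf : f ∈ Omega1) (z : ℝ)
    (hz : z = sSup {x | x ∈ Icc (0 : ℝ) 1 ∧ f x = -1}) (hz' : z ∈ Ioo (0 : ℝ) 1) :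
    (∫⁻ ω : Fin n → ℝ, volume (uncertainRegion1 (Set.range ω) f)
        ∂(Measure.pi fun _ => unif))
      = ENNReal.ofReal ((2 - (1 - z) ^ (n + 1) - z ^ (n + 1)) / (n + 1)) := by
  obtain ⟨hmono, hpm⟩ := hf
  set S := {x | x ∈ Icc (0 : ℝ) 1 ∧ f x = -1} with hS
  have hS_ne : S.Nonempty := by
    by_contra h
    rw [not_nonempty_iff_eq_empty] at h
    rw [h, Real.sSup_empty] at hz
    exact absurd hz hz'.1.ne'
  have hS_bdd : BddAbove S := ⟨1, fun y hy => hy.1.2⟩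
  have hflt : ∀ x ∈ Icc (0:ℝ) 1, x < z → f x = -1 := by
    intro x hx hlt
    obtain ⟨y, hyS, hxy⟩ := exists_lt_of_lt_csSup hS_ne (hz ▸ hlt)
    have hle := hmono hx hyS.1 hxy.le
    rcases hpm x hx with h | h
    · exact h
    · exfalso; rw [h, hyS.2] at hle; linarith
  have hfgt : ∀ x ∈ Icc (0:ℝ) 1, z < x → f x = 1 := by
    intro x hx hlt
    rcases hpm x hx with h | h
    · exfalso
      have : x ≤ z := hz ▸ le_csSup hS_bdd ⟨hx, h⟩
      linarith
    · exact h
  have hnull : unif ({x | x ∈ Icc (0:ℝ) 1 ∧ x ≠ z}ᶜ) = 0 := by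
    have hms : MeasurableSet {x | x ∈ Icc (0:ℝ) 1 ∧ x ≠ z} :=
      measurableSet_Icc.inter (measurableSet_singleton z).compl
    rw [unif, Measure.restrict_apply hms.compl]
    refine measure_mono_null (fun x hx => ?_) (measure_singleton z)
    obtain ⟨hx1, hx2⟩ := hx
    simp only [mem_compl_iff, mem_setOf_eq, not_and, not_ne_iff] at hx1
    exact hx1 hx2
  have hae : ∀ᵐ ω ∂(Measure.pi fun _ : Fin n => unif),
      ∀ i, ω i ∈ Icc (0:ℝ) 1 ∧ ω i ≠ z := by
    rw [ae_all_iff]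
    intro i
    rw [ae_iff]
    refine measure_mono_null (fun ω hω => ?_)
      (Measure.pi_eval_preimage_null (μ := fun _ : Fin n => unif) (i := i) hnull)
    exact hω
  have hcongr : ∀ᵐ ω ∂(Measure.pi fun _ : Fin n => unif),
      volume (uncertainRegion1 (Set.range ω) f)
        = volume (uncertainRegion1 (Set.range ω) (fun x => if x < z then (-1:ℝ) else 1)) := by
    filter_upwards [hae] with ω hω
    have hvals : ∀ x ∈ Set.range ω, f x = (fun x => if x < z then (-1:ℝ) else 1) x := by
      rintro x ⟨i, rfl⟩
      obtain ⟨hmem, hne⟩ := hω i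
      rcases lt_trichotomy (ω i) z with h | h | h
      · rw [hflt _ hmem h]; simp [h]
      · exact absurd h hne
      · rw [hfgt _ hmem h]; simp [not_lt.mpr h.le]
    rw [MCAux.uncertainRegion1_congr hvals]
  rw [lintegral_congr_ae hcongr]
  exact MCAux.main_aux n z hz'
end

section
/- Let p ≥ 1 and m ≥ 1 be integers and let D_SI(m) = {i/(m+1) : i = 1, …, m}^p be the static inner grid design with m^p points. Then for every monotone function f ∈ Ω, V(U(D_SI(m), f)) = 1 − m^p/(m+1)^p; in particular the volume of the uncertain region does not depend on f. -/
open MeasureTheory Set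

/-- The static inner grid design `D_SI(m) = {i/(m+1) : i = 1, …, m}^p`. -/
def staticInnerGrid (p m : ℕ) : Set (Fin p → ℝ) :=
  {x | ∀ k, ∃ i : ℕ, 1 ≤ i ∧ i ≤ m ∧ x k = (i : ℝ) / ((m : ℝ) + 1)}

namespace SIG

variable (p m : ℕ) (f : (Fin p → ℝ) → ℝ)

noncomputable def h (m : ℕ) : ℝ := 1 / ((m : ℝ) + 1)

lemma h_pos : 0 < h m := by unfold h; positivity

/-- grid point with integer coordinates `a` -/
noncomputable def ptN (a : Fin p → ℕ) : Fin p → ℝ := fun k => (a k : ℝ) * h m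

/-- open cell with lower-left integer corner `a` -/
def cellN (a : Fin p → ℕ) : Set (Fin p → ℝ) :=
  Set.pi Set.univ fun k => Ioo ((a k : ℝ) * h m) (((a k : ℝ) + 1) * h m)

def downN (a : Fin p → ℕ) : Prop :=
  (∀ k, a k + 1 ≤ m) ∧ f (ptN p m fun k => a k + 1) = -1

def upN (a : Fin p → ℕ) : Prop :=
  (∀ k, 1 ≤ a k) ∧ f (ptN p m a) = 1

def unclN (a : Fin p → ℕ) : Prop := ¬ downN p m f a ∧ ¬ upN p m f a

lemma ptN_mem_Icc (a : Fin p → ℕ) (hub : ∀ k, a k ≤ m) :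
    ptN p m a ∈ Icc (0 : Fin p → ℝ) 1 := by
  constructor <;> intro k
  · simp only [ptN, Pi.zero_apply]
    exact mul_nonneg (Nat.cast_nonneg _) (SIG.h_pos m).le
  · simp only [ptN, Pi.one_apply]
    have h1 : (a k : ℝ) ≤ (m : ℝ) + 1 := by
      have : (a k : ℝ) ≤ (m : ℝ) := Nat.cast_le.mpr (hub k)
      linarith
    have h2 : (0:ℝ) < (m:ℝ) + 1 := by positivity
    rw [h, mul_one_div, div_le_one h2]
    exact h1

lemma ptN_mem_grid (a : Fin p → ℕ) (hlb : ∀ k, 1 ≤ a k) (hub : ∀ k, a k ≤ m) :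
    ptN p m a ∈ staticInnerGrid p m := by
  intro k
  exact ⟨a k, hlb k, hub k, by rw [ptN, h, mul_one_div]⟩

lemma f_pm (hf : f ∈ OmegaSet p) (a : Fin p → ℕ) (hub : ∀ k, a k ≤ m) :
    f (ptN p m a) = -1 ∨ f (ptN p m a) = 1 :=
  hf.2 _ (ptN_mem_Icc p m a hub)

lemma f_le (hf : f ∈ OmegaSet p) (a b : Fin p → ℕ) (hb : ∀ k, b k ≤ m)
    (hab : ∀ k, a k ≤ b k) : f (ptN p m a) ≤ f (ptN p m b) := by
  refine hf.1 (ptN_mem_Icc p m a fun k => (hab k).trans (hb k)) (ptN_mem_Icc p m b hb) ?_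
  intro k
  exact mul_le_mul_of_nonneg_right (by exact_mod_cast hab k : (a k : ℝ) ≤ (b k : ℝ)) (h_pos m).le


lemma chain_not_lt (hf : f ∈ OmegaSet p) (a0 : Fin p → ℕ) {d d' : ℕ}
    (hb' : ∀ k, a0 k + d' ≤ m)
    (hu : unclN p m f (fun k => a0 k + d)) (hu' : unclN p m f (fun k => a0 k + d')) :
    ¬ d < d' := by
  intro hlt
  have hub1 : ∀ k, (a0 k + d) + 1 ≤ m := fun k => by have := hb' k; omega
  -- from ¬down at a0+d : f at a0+d+1 is 1
  have h1 : f (ptN p m fun k => (a0 k + d) + 1) = 1 := by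
    rcases f_pm p m f hf (fun k => (a0 k + d) + 1) hub1 with hv | hv
    · exact absurd ⟨hub1, hv⟩ hu.1
    · exact hv
  -- from ¬up at a0+d' : f at a0+d' is -1
  have h2 : f (ptN p m fun k => a0 k + d') = -1 := by
    rcases f_pm p m f hf (fun k => a0 k + d') hb' with hv | hv
    · exact hv
    · exact absurd ⟨fun k => by show 1 ≤ a0 k + d'; omega, hv⟩ hu'.2
  have hle := f_le p m f hf (fun k => (a0 k + d) + 1) (fun k => a0 k + d') hb'
    (fun k => by show (a0 k + d) + 1 ≤ a0 k + d'; omega)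
  rw [h1, h2] at hle
  linarith

lemma chain_uniq (hf : f ∈ OmegaSet p) (a0 : Fin p → ℕ) {d d' : ℕ}
    (hb : ∀ k, a0 k + d ≤ m) (hb' : ∀ k, a0 k + d' ≤ m)
    (hu : unclN p m f (fun k => a0 k + d)) (hu' : unclN p m f (fun k => a0 k + d')) :
    d = d' := by
  rcases lt_trichotomy d d' with hc | hc | hc
  · exact absurd hc (chain_not_lt p m f hf a0 hb' hu hu')
  · exact hc
  · exact absurd hc (chain_not_lt p m f hf a0 hb hu' hu)

lemma chain_exists (hf : f ∈ OmegaSet p) (hp : 0 < p) (a0 : Fin p → ℕ)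
    (h0 : ∃ k, a0 k = 0) (hub : ∀ k, a0 k ≤ m) :
    ∃ d, (∀ k, a0 k + d ≤ m) ∧ unclN p m f (fun k => a0 k + d) := by
  classical
  have hne : (Finset.univ : Finset (Fin p)).Nonempty := ⟨⟨0, hp⟩, Finset.mem_univ _⟩
  set M := Finset.univ.sup' hne a0 with hM
  obtain ⟨kM, _, hkM⟩ := Finset.exists_mem_eq_sup' hne a0
  have hkM' : a0 kM = M := hkM.symm
  have hMle : M ≤ m := by rw [← hkM']; exact hub kM
  have hleM : ∀ k, a0 k ≤ M := fun k => Finset.le_sup' a0 (Finset.mem_univ k)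
  set P : ℕ → Prop := fun t => t = m - M ∨
    (t < m - M ∧ f (ptN p m fun k => a0 k + t + 1) = 1) with hP
  have hPex : ∃ t, P t := ⟨m - M, Or.inl rfl⟩
  set s := Nat.find hPex with hs
  have hsP : P s := Nat.find_spec hPex
  have hsle : s ≤ m - M := Nat.find_le (Or.inl rfl)
  refine ⟨s, fun k => by have := hleM k; omega, ?_, ?_⟩
  · -- ¬ down
    rintro ⟨hd1, hd2⟩
    rcases hsP with hcase | ⟨_, hval⟩
    · have hbM : a0 kM + s + 1 ≤ m := hd1 kM
      omega
    · have hd2' : f (ptN p m fun k => a0 k + s + 1) = -1 := hd2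
      rw [hval] at hd2'
      linarith
  · -- ¬ up
    rintro ⟨hu1, hu2⟩
    rcases Nat.eq_zero_or_pos s with hs0 | hs0
    · obtain ⟨k0, hk0⟩ := h0
      have : 1 ≤ a0 k0 + s := hu1 k0
      omega
    · have hnot : ¬ P (s - 1) := Nat.find_min hPex (by omega)
      apply hnot
      right
      refine ⟨by omega, ?_⟩
      have : (fun k => a0 k + (s - 1) + 1) = (fun k => a0 k + s) := by
        funext k; omega
      rw [this]
      exact hu2


open Finset in
lemma card_uncl (hf : f ∈ OmegaSet p) (hp : 0 < p)
    [DecidablePred (fun a : Fin p → Fin (m+1) => unclN p m f (fun k => (a k : ℕ)))] :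
    (Finset.univ.filter
      (fun a : Fin p → Fin (m+1) => unclN p m f (fun k => (a k : ℕ)))).card
      = (m+1)^p - m^p := by
  classical
  have hne : (Finset.univ : Finset (Fin p)).Nonempty := ⟨⟨0, hp⟩, Finset.mem_univ _⟩
  set A := Finset.univ.filter
      (fun a : Fin p → Fin (m+1) => unclN p m f (fun k => (a k : ℕ))) with hA
  set B := Finset.univ.filter
      (fun a : Fin p → Fin (m+1) => ∃ k, (a k : ℕ) = 0) with hB
  -- the min of coordinates
  set t : (Fin p → Fin (m+1)) → ℕ := fun a => Finset.univ.inf' hne (fun k => (a k : ℕ))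
    with ht
  have htle : ∀ a k, t a ≤ (a k : ℕ) := fun a k =>
    Finset.inf'_le _ (Finset.mem_univ k)
  have htmem : ∀ a, ∃ k, (a k : ℕ) = t a := by
    intro a
    obtain ⟨k, _, hk⟩ := Finset.exists_mem_eq_inf' hne (fun k => (a k : ℕ))
    exact ⟨k, hk.symm⟩
  have hcard : A.card = B.card := by
    refine Finset.card_bij
      (fun a _ => fun k => (⟨(a k : ℕ) - t a, by
        have := (a k).isLt; omega⟩ : Fin (m+1))) ?_ ?_ ?_
    · intro a ha
      rw [hB, Finset.mem_filter]
      obtain ⟨k, hk⟩ := htmem a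
      exact ⟨Finset.mem_univ _, ⟨k, by simp [hk]⟩⟩
    · intro a1 ha1 a2 ha2 heq
      rw [hA, Finset.mem_filter] at ha1 ha2
      have h1 : ∀ k, (a1 k : ℕ) = ((a1 k : ℕ) - t a1) + t a1 :=
        fun k => by have := htle a1 k; omega
      have h2 : ∀ k, (a2 k : ℕ) = ((a2 k : ℕ) - t a2) + t a2 :=
        fun k => by have := htle a2 k; omega
      have hvals : ∀ k, (a1 k : ℕ) - t a1 = (a2 k : ℕ) - t a2 := by
        intro k
        have := congrFun heq k
        exact congrArg Fin.val this
      set a0 : Fin p → ℕ := fun k => (a1 k : ℕ) - t a1 with ha0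
      have hu1 : unclN p m f (fun k => a0 k + t a1) := by
        have : (fun k => a0 k + t a1) = (fun k => (a1 k : ℕ)) := by
          funext k; show (a1 k : ℕ) - t a1 + t a1 = (a1 k : ℕ)
          have := htle a1 k; omega
        rw [this]; exact ha1.2
      have hu2 : unclN p m f (fun k => a0 k + t a2) := by
        have : (fun k => a0 k + t a2) = (fun k => (a2 k : ℕ)) := by
          funext k; show (a1 k : ℕ) - t a1 + t a2 = (a2 k : ℕ)
          rw [hvals k]; have := htle a2 k; omega
        rw [this]; exact ha2.2
      have hb1 : ∀ k, a0 k + t a1 ≤ m := by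
        intro k; show (a1 k : ℕ) - t a1 + t a1 ≤ m
        have := (a1 k).isLt; have := htle a1 k; omega
      have hb2 : ∀ k, a0 k + t a2 ≤ m := by
        intro k; show (a1 k : ℕ) - t a1 + t a2 ≤ m
        rw [hvals k]; have := (a2 k).isLt; have := htle a2 k; omega
      have hteq : t a1 = t a2 := chain_uniq p m f hf a0 hb1 hb2 hu1 hu2
      funext k
      apply Fin.ext
      have := hvals k
      have := htle a1 k
      have := htle a2 k
      omega
    · intro b hb'
      rw [hB, Finset.mem_filter] at hb'
      obtain ⟨k0, hk0⟩ := hb'.2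
      obtain ⟨d, hdb, hdu⟩ := chain_exists p m f hf hp (fun k => (b k : ℕ))
        ⟨k0, hk0⟩ (fun k => by show (b k : ℕ) ≤ m; have := (b k).isLt; omega)
      refine ⟨fun k => (⟨(b k : ℕ) + d, by
        have h2 : (b k : ℕ) + d ≤ m := hdb k; omega⟩ : Fin (m+1)), ?_, ?_⟩
      · rw [hA, Finset.mem_filter]
        exact ⟨Finset.mem_univ _, hdu⟩
      · -- t of the constructed element is d
        set a : Fin p → Fin (m+1) :=
          fun k => (⟨(b k : ℕ) + d, by
            have h2 : (b k : ℕ) + d ≤ m := hdb k; omega⟩ : Fin (m+1)) with haa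
        have hta : t a = d := by
          apply le_antisymm
          · have : (a k0 : ℕ) = d := by rw [haa]; simp [hk0]
            rw [← this]; exact htle a k0
          · apply Finset.le_inf'
            intro k _
            show d ≤ (a k : ℕ)
            rw [haa]; simp
        funext k
        apply Fin.ext
        show ((a k : ℕ) - t a : ℕ) = (b k : ℕ)
        rw [hta, haa]
        simp
  rw [hcard]
  -- card B = (m+1)^p - m^p
  have hcompl : (Finset.univ.filter
      (fun a : Fin p → Fin (m+1) => ¬ ∃ k, (a k : ℕ) = 0)).card = m^p := by
    have : ∀ a : Fin p → Fin (m+1), (¬ ∃ k, (a k : ℕ) = 0) ↔ ∀ k, a k ≠ 0 := by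
      intro a
      push_neg
      constructor
      · intro hh k h0
        exact hh k (by simp [h0])
      · intro hh k h0
        exact hh k (Fin.ext (by simp [h0]))
    calc (Finset.univ.filter
        (fun a : Fin p → Fin (m+1) => ¬ ∃ k, (a k : ℕ) = 0)).card
        = (Finset.univ.filter
            (fun a : Fin p → Fin (m+1) => ∀ k, a k ≠ 0)).card := by
          apply Finset.card_bij (fun a _ => a) <;> intros <;>
            simp_all [this]
      _ = (Finset.univ : Finset (Fin p → Fin m)).card := by
          refine Finset.card_bij (fun a ha => fun k => (a k).pred ?_) ?_ ?_ ?_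
          · exact (Finset.mem_filter.mp ha).2 k
          · intro a ha; exact Finset.mem_univ _
          · intro a1 ha1 a2 ha2 heq
            funext k
            have := congrFun heq k
            exact Fin.pred_inj.mp this
          · intro b _
            refine ⟨fun k => (b k).succ, ?_, ?_⟩
            · rw [Finset.mem_filter]
              exact ⟨Finset.mem_univ _, fun k => Fin.succ_ne_zero _⟩
            · funext k; simp
      _ = m^p := by simp
  have htotal : B.card + (Finset.univ.filter
      (fun a : Fin p → Fin (m+1) => ¬ ∃ k, (a k : ℕ) = 0)).card
      = (Finset.univ : Finset (Fin p → Fin (m+1))).card := by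
    rw [hB]
    exact Finset.card_filter_add_card_filter_not _
  have huniv : (Finset.univ : Finset (Fin p → Fin (m+1))).card = (m+1)^p := by
    simp
  have hkey : B.card + m^p = (m+1)^p := by rw [← hcompl, htotal, huniv]
  exact Nat.eq_sub_of_add_eq hkey


lemma cell_subset_Icc (a : Fin p → ℕ) (hub : ∀ k, a k ≤ m) :
    cellN p m a ⊆ Icc (0 : Fin p → ℝ) 1 := by
  intro x hx
  rw [cellN, Set.mem_univ_pi] at hx
  constructor <;> intro k
  · have h1 := (hx k).1
    have h0 : (0:ℝ) ≤ (a k : ℝ) * h m := mul_nonneg (Nat.cast_nonneg _) (h_pos m).le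
    simpa using le_of_lt (lt_of_le_of_lt h0 h1)
  · have h1 := (hx k).2
    have hle : ((a k : ℝ) + 1) * h m ≤ 1 := by
      have hcast : (a k : ℝ) + 1 ≤ (m : ℝ) + 1 := by
        have : (a k : ℝ) ≤ m := Nat.cast_le.mpr (hub k); linarith
      have hpos : (0:ℝ) < (m:ℝ)+1 := by positivity
      rw [h, mul_one_div, div_le_one hpos]; exact hcast
    simpa using le_of_lt (lt_of_lt_of_le h1 hle)

lemma uncl_subset (hf : f ∈ OmegaSet p) (a : Fin p → ℕ) (hub : ∀ k, a k ≤ m)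
    (hu : unclN p m f a) :
    cellN p m a ⊆ uncertainRegion p (staticInnerGrid p m) f := by
  intro y hy
  have hyIcc := cell_subset_Icc p m a hub hy
  rw [cellN, Set.mem_univ_pi] at hy
  refine ⟨hyIcc, ?_⟩
  rintro (hmem | hmem)
  · rw [Set.mem_iUnion₂] at hmem
    obtain ⟨x, hx, hyx⟩ := hmem
    obtain ⟨hxD, hxf⟩ := hx
    choose i hi1 hi2 hi3 using hxD
    have hxpt : x = ptN p m i := by
      funext k; rw [hi3 k, ptN, h, mul_one_div]
    have hkey : ∀ k, a k + 1 ≤ i k := by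
      intro k
      by_contra hc
      push_neg at hc
      have hik : (i k : ℝ) ≤ (a k : ℝ) := Nat.cast_le.mpr (by omega)
      have h1 : y k ≤ x k := hyx.2 k
      have h2 : (a k : ℝ) * h m < y k := (hy k).1
      have h3 : x k = (i k : ℝ) * h m := by rw [hi3 k, h, mul_one_div]
      have h4 : (i k : ℝ) * h m ≤ (a k : ℝ) * h m :=
        mul_le_mul_of_nonneg_right hik (h_pos m).le
      linarith
    have hub' : ∀ k, a k + 1 ≤ m := fun k => (hkey k).trans (hi2 k)
    have hfle := f_le p m f hf (fun k => a k + 1) i hi2 hkey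
    rw [← hxpt, hxf] at hfle
    have hval : f (ptN p m fun k => a k + 1) = -1 := by
      rcases f_pm p m f hf (fun k => a k + 1) hub' with hv | hv
      · exact hv
      · rw [hv] at hfle; linarith
    exact hu.1 ⟨hub', hval⟩
  · rw [Set.mem_iUnion₂] at hmem
    obtain ⟨x, hx, hxy⟩ := hmem
    obtain ⟨hxD, hxf⟩ := hx
    choose i hi1 hi2 hi3 using hxD
    have hxpt : x = ptN p m i := by
      funext k; rw [hi3 k, ptN, h, mul_one_div]
    have hkey : ∀ k, i k ≤ a k := by
      intro k
      by_contra hc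
      push_neg at hc
      have hik : (a k : ℝ) + 1 ≤ (i k : ℝ) := by exact_mod_cast hc
      have h1 : x k ≤ y k := hxy.1 k
      have h2 : y k < ((a k : ℝ) + 1) * h m := (hy k).2
      have h3 : x k = (i k : ℝ) * h m := by rw [hi3 k, h, mul_one_div]
      have h4 : ((a k : ℝ) + 1) * h m ≤ (i k : ℝ) * h m :=
        mul_le_mul_of_nonneg_right hik (h_pos m).le
      linarith
    have hlb' : ∀ k, 1 ≤ a k := fun k => (hi1 k).trans (hkey k)
    have hfle := f_le p m f hf i a hub hkey
    rw [← hxpt, hxf] at hfle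
    have hval : f (ptN p m a) = 1 := by
      rcases f_pm p m f hf a hub with hv | hv
      · rw [hv] at hfle; linarith
      · exact hv
    exact hu.2 ⟨hlb', hval⟩

lemma classified_cell_disj (hf : f ∈ OmegaSet p) (a : Fin p → ℕ) (hub : ∀ k, a k ≤ m)
    (hc : ¬ unclN p m f a) :
    cellN p m a ∩ uncertainRegion p (staticInnerGrid p m) f = ∅ := by
  rw [Set.eq_empty_iff_forall_notMem]
  rintro y ⟨hyc, hyU⟩
  have hyIcc := cell_subset_Icc p m a hub hyc
  rw [cellN, Set.mem_univ_pi] at hyc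
  apply hyU.2
  rw [unclN, not_and_or, not_not, not_not] at hc
  rcases hc with hd | hup
  · left
    rw [Set.mem_iUnion₂]
    refine ⟨ptN p m (fun k => a k + 1),
      ⟨ptN_mem_grid p m _ (fun k => by omega) hd.1, hd.2⟩, ?_, ?_⟩
    · intro k
      have h1 := (hyc k).1
      have h0 : (0:ℝ) ≤ (a k : ℝ) * h m := mul_nonneg (Nat.cast_nonneg _) (h_pos m).le
      simpa using le_of_lt (lt_of_le_of_lt h0 h1)
    · intro k
      have h1 := (hyc k).2
      have : ptN p m (fun k => a k + 1) k = ((a k : ℝ) + 1) * h m := by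
        rw [ptN]; push_cast; ring
      rw [this]
      exact le_of_lt h1
  · right
    rw [Set.mem_iUnion₂]
    refine ⟨ptN p m a, ⟨ptN_mem_grid p m _ hup.1 hub, hup.2⟩, ?_, ?_⟩
    · intro k
      exact le_of_lt (hyc k).1
    · intro k
      simpa using hyIcc.2 k

lemma cell_measurable (a : Fin p → ℕ) : MeasurableSet (cellN p m a) :=
  MeasurableSet.univ_pi fun _ => measurableSet_Ioo

lemma cell_volume (a : Fin p → ℕ) :
    volume (cellN p m a) = ENNReal.ofReal (h m) ^ p := by
  rw [cellN, volume_pi_pi]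
  have hv : ∀ k : Fin p,
      volume (Ioo ((a k : ℝ) * h m) (((a k : ℝ) + 1) * h m)) = ENNReal.ofReal (h m) := by
    intro k; rw [Real.volume_Ioo]; congr 1; ring
  simp only [hv, Finset.prod_const, Finset.card_univ, Fintype.card_fin]

lemma cell_disj_of_lt (a b : Fin p → ℕ) (k : Fin p) (hk : a k < b k) :
    Disjoint (cellN p m a) (cellN p m b) := by
  rw [Set.disjoint_left]
  intro x hxa hxb
  rw [cellN, Set.mem_univ_pi] at hxa hxb
  have h1 : x k < ((a k : ℝ) + 1) * h m := (hxa k).2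
  have h2 : (b k : ℝ) * h m < x k := (hxb k).1
  have h3 : ((a k : ℝ) + 1) ≤ (b k : ℝ) := by exact_mod_cast hk
  have h4 : ((a k : ℝ) + 1) * h m ≤ (b k : ℝ) * h m :=
    mul_le_mul_of_nonneg_right h3 (h_pos m).le
  linarith

end SIG


/-- Theorem (static inner grid): for every monotone `f`, the uncertain volume of the
static inner grid design equals `1 - m^p/(m+1)^p`, independently of `f`. -/
theorem staticInnerGrid_uncertain_volume (p m : ℕ) (hp : 1 ≤ p) (hm : 1 ≤ m)
    (f : (Fin p → ℝ) → ℝ) (hf : f ∈ OmegaSet p) :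
    volume (uncertainRegion p (staticInnerGrid p m) f)
      = ENNReal.ofReal (1 - (m : ℝ) ^ p / ((m : ℝ) + 1) ^ p) := by
  classical
  have hp0 : 0 < p := hp
  set c : ENNReal := ENNReal.ofReal (SIG.h m) with hc
  set g : (Fin p → Fin (m+1)) → Set (Fin p → ℝ) :=
    fun a => SIG.cellN p m (fun k => (a k : ℕ)) with hg
  set A := Finset.univ.filter
    (fun a : Fin p → Fin (m+1) => SIG.unclN p m f (fun k => (a k : ℕ))) with hA
  set Ac := Finset.univ.filter
    (fun a : Fin p → Fin (m+1) => ¬ SIG.unclN p m f (fun k => (a k : ℕ))) with hAc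
  have hub : ∀ (a : Fin p → Fin (m+1)) (k : Fin p), (a k : ℕ) ≤ m :=
    fun a k => by have := (a k).isLt; omega
  have hgmeas : ∀ a, MeasurableSet (g a) := fun a => SIG.cell_measurable p m _
  have hgvol : ∀ a, volume (g a) = c ^ p := fun a => SIG.cell_volume p m _
  have hdisj : ∀ s : Finset (Fin p → Fin (m+1)), (↑s : Set _).PairwiseDisjoint g := by
    intro s a _ b _ hne'
    have hex : ∃ k, (a k : ℕ) ≠ (b k : ℕ) := by
      by_contra hcc
      push_neg at hcc
      exact hne' (funext fun k => Fin.ext (hcc k))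
    obtain ⟨k, hk⟩ := hex
    rcases Nat.lt_or_ge (a k : ℕ) (b k : ℕ) with hlt | hge
    · exact SIG.cell_disj_of_lt p m _ _ k hlt
    · exact (SIG.cell_disj_of_lt p m _ _ k (by omega)).symm
  have hvol_union : ∀ s : Finset (Fin p → Fin (m+1)),
      volume (⋃ a ∈ s, g a) = s.card * c ^ p := by
    intro s
    rw [measure_biUnion_finset (hdisj s) (fun b _ => hgmeas b)]
    simp [hgvol, Finset.sum_const]
  have hlow : (⋃ a ∈ A, g a) ⊆ uncertainRegion p (staticInnerGrid p m) f := by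
    intro y hy
    rw [Set.mem_iUnion₂] at hy
    obtain ⟨a, ha, hya⟩ := hy
    exact SIG.uncl_subset p m f hf _ (hub a) ((Finset.mem_filter.mp ha).2) hya
  have hupper : uncertainRegion p (staticInnerGrid p m) f
      ⊆ Icc 0 1 \ ⋃ a ∈ Ac, g a := by
    intro y hy
    refine ⟨hy.1, ?_⟩
    intro hmem
    rw [Set.mem_iUnion₂] at hmem
    obtain ⟨a, ha, hya⟩ := hmem
    have hd := SIG.classified_cell_disj p m f hf _ (hub a) ((Finset.mem_filter.mp ha).2)
    exact Set.eq_empty_iff_forall_notMem.mp hd y ⟨hya, hy⟩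
  have hIccvol : volume (Icc (0 : Fin p → ℝ) 1) = 1 := by
    rw [Real.volume_Icc_pi]
    simp
  have hsub2 : (⋃ a ∈ Ac, g a) ⊆ Icc (0 : Fin p → ℝ) 1 := by
    intro y hy
    rw [Set.mem_iUnion₂] at hy
    obtain ⟨a, _, hya⟩ := hy
    exact SIG.cell_subset_Icc p m _ (hub a) hya
  have hvolAc_ne : volume (⋃ a ∈ Ac, g a) ≠ ⊤ := by
    rw [hvol_union]
    exact ENNReal.mul_ne_top (ENNReal.natCast_ne_top _)
      (ENNReal.pow_ne_top ENNReal.ofReal_ne_top)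
  have hup_vol : volume (Icc (0 : Fin p → ℝ) 1 \ ⋃ a ∈ Ac, g a)
      = 1 - Ac.card * c ^ p := by
    rw [measure_diff hsub2
      (MeasurableSet.nullMeasurableSet (Finset.measurableSet_biUnion _ fun b _ => hgmeas b))
      hvolAc_ne, hIccvol, hvol_union]
  -- key identity : (m+1)^p * c^p = 1
  have hone : (((m+1)^p : ℕ) : ENNReal) * c ^ p = 1 := by
    rw [hc, Nat.cast_pow, ← mul_pow]
    have : ((m+1 : ℕ) : ENNReal) * ENNReal.ofReal (SIG.h m) = 1 := by
      rw [← ENNReal.ofReal_natCast, ← ENNReal.ofReal_mul (by positivity)]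
      rw [SIG.h]
      rw [show ((m+1 : ℕ) : ℝ) * (1 / ((m:ℝ)+1)) = 1 by push_cast; field_simp]
      exact ENNReal.ofReal_one
    rw [this, one_pow]
  have hsum_card : A.card + Ac.card = (m+1)^p := by
    have h1 : A.card + Ac.card
        = (Finset.univ : Finset (Fin p → Fin (m+1))).card := by
      rw [hA, hAc]
      exact Finset.card_filter_add_card_filter_not _
    rw [h1]
    simp
  have hAeq : (1 : ENNReal) - Ac.card * c ^ p = A.card * c ^ p := by
    have hadd : (A.card : ENNReal) * c ^ p + Ac.card * c ^ p = 1 := by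
      rw [← add_mul, ← Nat.cast_add, hsum_card, hone]
    have hfin : (Ac.card : ENNReal) * c ^ p ≠ ⊤ :=
      ENNReal.mul_ne_top (ENNReal.natCast_ne_top _)
        (ENNReal.pow_ne_top ENNReal.ofReal_ne_top)
    exact (ENNReal.eq_sub_of_add_eq hfin hadd).symm
  have hfinal : volume (uncertainRegion p (staticInnerGrid p m) f)
      = A.card * c ^ p := by
    apply le_antisymm
    · calc volume (uncertainRegion p (staticInnerGrid p m) f)
          ≤ volume (Icc (0 : Fin p → ℝ) 1 \ ⋃ a ∈ Ac, g a) := measure_mono hupper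
        _ = 1 - Ac.card * c ^ p := hup_vol
        _ = A.card * c ^ p := hAeq
    · calc (A.card : ENNReal) * c ^ p = volume (⋃ a ∈ A, g a) := (hvol_union A).symm
        _ ≤ volume (uncertainRegion p (staticInnerGrid p m) f) := measure_mono hlow
  rw [hfinal, hA, SIG.card_uncl p m f hf hp0]
  -- arithmetic
  have hcard_cast : (((m+1)^p - m^p : ℕ) : ℝ) = ((m:ℝ)+1)^p - (m:ℝ)^p := by
    rw [Nat.cast_sub (Nat.pow_le_pow_left (by omega) p)]
    push_cast
    ring
  rw [hc, ← ENNReal.ofReal_pow (by rw [SIG.h]; positivity),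
    ← ENNReal.ofReal_natCast, ← ENNReal.ofReal_mul (by positivity)]
  congr 1
  rw [hcard_cast, SIG.h]
  have hpos : (0:ℝ) < ((m:ℝ)+1)^p := by positivity
  field_simp
  rw [div_pow, one_pow]
  field_simp
end

section
/- Let p = 1, let X_1, X_2, … be independent random points uniformly distributed on [0,1], and let f̃ ∈ Ω be defined by f̃(x) = −1 if x < 1/2 and f̃(x) = 1 otherwise. For n ≥ 1 define the adaptive Monte Carlo evaluation count M_n = card{ i ∈ {1,…,n} : X_i ∈ U({X_1,…,X_{i−1}}, f̃) }. Then lim_{n→∞} ( E[M_n] − 2·ln n ) = 2·(γ − ln 2), where γ is the Euler–Mascheroni constant. -/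
open MeasureTheory Set Filter
open scoped Classical

instance inst_s12 : IsProbabilityMeasure unif := by
  constructor; simp [unif, Measure.restrict_apply, Real.volume_Icc]

/-- indicator of the compatibility condition between a new point `t` and an old point `s` -/
noncomputable def cInd (t s : ℝ) : ℝ :=
  if (s < 1/2 → s < t) ∧ (1/2 ≤ s → t < s) then 1 else 0

noncomputable def hr (t : ℝ) : ℝ := if t < 1/2 then 1/2 + t else 3/2 - t

lemma integral_cInd {t : ℝ} (ht : t ∈ Icc (0:ℝ) 1) :
    ∫ s, cInd t s ∂unif = hr t := by
  obtain ⟨ht0, ht1⟩ := ht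
  by_cases htl : t < 1/2
  · have hA : {s : ℝ | (s < 1/2 → s < t) ∧ (1/2 ≤ s → t < s)} = Iio t ∪ Ici (1/2) := by
      ext s
      simp only [mem_setOf_eq, mem_union, mem_Iio, mem_Ici]
      constructor
      · rintro ⟨h1, h2⟩
        by_cases hs : s < 1/2
        · exact Or.inl (h1 hs)
        · exact Or.inr (not_lt.mp hs)
      · rintro (h | h)
        · exact ⟨fun _ => h, fun hs => lt_of_lt_of_le htl hs⟩
        · exact ⟨fun hs => absurd h (not_le.mpr hs), fun _ => lt_of_lt_of_le htl h⟩
    have : (fun s => cInd t s) = Set.indicator {s : ℝ | (s < 1/2 → s < t) ∧ (1/2 ≤ s → t < s)} 1 := by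
      funext s
      simp [cInd, Set.indicator_apply, mem_setOf_eq]
    rw [this, hA]
    have hmeas : MeasurableSet (Iio t ∪ Ici (1/2) : Set ℝ) :=
      measurableSet_Iio.union measurableSet_Ici
    rw [integral_indicator_one hmeas]
    have : unif (Iio t ∪ Ici (1/2)) = ENNReal.ofReal (1/2 + t) := by
      rw [unif, Measure.restrict_apply hmeas]
      have : (Iio t ∪ Ici (1/2)) ∩ Icc (0:ℝ) 1 = Ico 0 t ∪ Icc (1/2) 1 := by
        ext s
        simp only [mem_inter_iff, mem_union, mem_Iio, mem_Ici, mem_Icc, mem_Ico]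
        constructor
        · rintro ⟨h | h, h0, h1⟩
          · exact Or.inl ⟨h0, h⟩
          · exact Or.inr ⟨h, h1⟩
        · rintro (⟨h0, h⟩ | ⟨h, h1⟩)
          · exact ⟨Or.inl h, h0, by linarith⟩
          · exact ⟨Or.inr h, le_trans (by norm_num) h, h1⟩
      rw [this, measure_union _ (measurableSet_Icc)]
      · rw [Real.volume_Ico, Real.volume_Icc, ← ENNReal.ofReal_add (by linarith) (by norm_num)]
        congr 1
        ring
      · apply Set.disjoint_left.mpr
        rintro s ⟨_, hs⟩ ⟨hs', _⟩
        exact absurd (lt_of_lt_of_le (lt_trans hs htl) hs') (lt_irrefl s)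
    rw [measureReal_def, this, ENNReal.toReal_ofReal (by linarith), hr, if_pos htl]
  · push_neg at htl
    have hA : {s : ℝ | (s < 1/2 → s < t) ∧ (1/2 ≤ s → t < s)} = Iio (1/2) ∪ Ioi t := by
      ext s
      simp only [mem_setOf_eq, mem_union, mem_Iio, mem_Ioi]
      constructor
      · rintro ⟨h1, h2⟩
        by_cases hs : s < 1/2
        · exact Or.inl hs
        · exact Or.inr (h2 (not_lt.mp hs))
      · rintro (h | h)
        · exact ⟨fun _ => lt_of_lt_of_le h htl, fun hs => absurd h (not_lt.mpr hs)⟩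
        · exact ⟨fun hs => absurd hs (not_lt.mpr (le_trans htl (le_of_lt h))), fun _ => h⟩
    have : (fun s => cInd t s) = Set.indicator {s : ℝ | (s < 1/2 → s < t) ∧ (1/2 ≤ s → t < s)} 1 := by
      funext s
      simp [cInd, Set.indicator_apply, mem_setOf_eq]
    rw [this, hA]
    have hmeas : MeasurableSet (Iio (1/2) ∪ Ioi t : Set ℝ) :=
      measurableSet_Iio.union measurableSet_Ioi
    rw [integral_indicator_one hmeas]
    have : unif (Iio (1/2) ∪ Ioi t) = ENNReal.ofReal (3/2 - t) := by
      rw [unif, Measure.restrict_apply hmeas]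
      have : (Iio (1/2) ∪ Ioi t) ∩ Icc (0:ℝ) 1 = Ico 0 (1/2) ∪ Ioc t 1 := by
        ext s
        simp only [mem_inter_iff, mem_union, mem_Iio, mem_Ioi, mem_Icc, mem_Ico, mem_Ioc]
        constructor
        · rintro ⟨h | h, h0, h1⟩
          · exact Or.inl ⟨h0, h⟩
          · exact Or.inr ⟨h, h1⟩
        · rintro (⟨h0, h⟩ | ⟨h, h1⟩)
          · exact ⟨Or.inl h, h0, by linarith⟩
          · exact ⟨Or.inr h, by linarith, h1⟩
      rw [this, measure_union _ (measurableSet_Ioc)]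
      · rw [Real.volume_Ico, Real.volume_Ioc, ← ENNReal.ofReal_add (by norm_num) (by linarith)]
        congr 1
        ring
      · apply Set.disjoint_left.mpr
        rintro s ⟨_, hs⟩ ⟨hs', _⟩
        exact absurd (lt_of_lt_of_le hs (le_trans htl (le_of_lt hs'))) (lt_irrefl s)
    rw [measureReal_def, this, ENNReal.toReal_ofReal (by linarith), hr, if_neg (not_lt.mpr htl)]

/-- The event that the `i`-th point is in the current uncertain region, in explicit form. -/
def Ev (n : ℕ) (i : Fin n) : Set (Fin n → ℝ) :=
  {ω | ω i ∈ Icc (0:ℝ) 1 ∧ ∀ j, j < i → ((ω j < 1/2 → ω j < ω i) ∧ (1/2 ≤ ω j → ω i < ω j))}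

lemma memU_iff (n : ℕ) (ω : Fin n → ℝ) (i : Fin n) :
    ω i ∈ uncertainRegion1 {x | ∃ j : Fin n, j < i ∧ ω j = x}
      (fun x => if x < 1 / 2 then (-1 : ℝ) else 1) ↔ ω ∈ Ev n i := by
  have hne : ∀ x : ℝ, ((if x < 1/2 then (-1:ℝ) else 1) = -1) ↔ x < 1/2 := by
    intro x; constructor
    · intro hx; by_contra h; rw [if_neg h] at hx; norm_num at hx
    · intro hx; rw [if_pos hx]
  have hpo : ∀ x : ℝ, ((if x < 1/2 then (-1:ℝ) else 1) = 1) ↔ 1/2 ≤ x := by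
    intro x; constructor
    · intro hx
      by_cases h : x < 1/2
      · rw [if_pos h] at hx; norm_num at hx
      · exact not_lt.mp h
    · intro hx; rw [if_neg (not_lt.mpr hx)]
  simp only [uncertainRegion1, mem_diff, mem_union, mem_iUnion, exists_prop, mem_setOf_eq,
    sep_setOf, not_or, not_exists, not_and, Ev, mem_Icc, hne, hpo]
  constructor
  · rintro ⟨⟨h0, h1⟩, hA, hB⟩
    refine ⟨⟨h0, h1⟩, fun j hj => ⟨fun hlt => ?_, fun hge => ?_⟩⟩
    · exact not_le.mp (hA (ω j) ⟨⟨j, hj, rfl⟩, hlt⟩ h0)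
    · by_contra hc
      exact hB (ω j) ⟨⟨j, hj, rfl⟩, hge⟩ (not_lt.mp hc) h1
  · rintro ⟨⟨h0, h1⟩, hC⟩
    refine ⟨⟨h0, h1⟩, ?_, ?_⟩
    · rintro x ⟨⟨j, hj, rfl⟩, hlt⟩ _
      exact not_le.mpr ((hC j hj).1 hlt)
    · rintro x ⟨⟨j, hj, rfl⟩, hge⟩ hle
      exact absurd hle (not_le.mpr ((hC j hj).2 hge))

lemma Ev_meas (n : ℕ) (i : Fin n) : MeasurableSet (Ev n i) := by
  have h1 : MeasurableSet {ω : Fin n → ℝ | ω i ∈ Icc (0:ℝ) 1} :=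
    (measurable_pi_apply i) measurableSet_Icc
  have h2 : ∀ j : Fin n, MeasurableSet {ω : Fin n → ℝ |
      j < i → ((ω j < 1/2 → ω j < ω i) ∧ (1/2 ≤ ω j → ω i < ω j))} := by
    intro j
    by_cases hj : j < i
    · simp only [hj, true_implies]
      apply MeasurableSet.inter
      · show MeasurableSet {ω : Fin n → ℝ | ω j < 1/2 → ω j < ω i}
        have : {ω : Fin n → ℝ | ω j < 1/2 → ω j < ω i}
            = {ω : Fin n → ℝ | ¬ ω j < 1/2} ∪ {ω | ω j < ω i} := by
          ext ω; simp [imp_iff_not_or]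
        rw [this]
        exact (((measurable_pi_apply j) measurableSet_Iio).compl).union
          (measurableSet_lt (measurable_pi_apply j) (measurable_pi_apply i))
      · show MeasurableSet {ω : Fin n → ℝ | 1/2 ≤ ω j → ω i < ω j}
        have : {ω : Fin n → ℝ | 1/2 ≤ ω j → ω i < ω j}
            = {ω : Fin n → ℝ | ¬ 1/2 ≤ ω j} ∪ {ω | ω i < ω j} := by
          ext ω; simp [imp_iff_not_or]
        rw [this]
        exact (((measurable_pi_apply j) measurableSet_Ici).compl).union
          (measurableSet_lt (measurable_pi_apply i) (measurable_pi_apply j))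
    · simp only [hj, false_implies, setOf_true]
      exact MeasurableSet.univ
  have : Ev n i = {ω : Fin n → ℝ | ω i ∈ Icc (0:ℝ) 1} ∩
      ⋂ j : Fin n, {ω | j < i → ((ω j < 1/2 → ω j < ω i) ∧ (1/2 ≤ ω j → ω i < ω j))} := by
    ext ω; simp [Ev, mem_iInter]
  rw [this]
  exact h1.inter (MeasurableSet.iInter h2)

/-- generic product-integral formula for pi measures -/
lemma integral_pi_prod {E : Type*} [MeasurableSpace E] (μ : Measure E) [SigmaFinite μ]
    {ι : Type*} [Fintype ι] (f : ι → E → ℝ) :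
    ∫ x : ι → E, ∏ i, f i (x i) ∂(Measure.pi fun _ => μ) = ∏ i, ∫ x, f i x ∂μ := by
  letI : MeasureSpace E := ⟨μ⟩
  exact MeasureTheory.integral_fintype_prod_eq_prod (ι := ι) f

lemma card_filter_lt (m : ℕ) (c : ℕ) (hc : c ≤ m) :
    (Finset.univ.filter (fun k : Fin m => (k : ℕ) < c)).card = c := by
  conv_rhs => rw [← Finset.card_range c]
  refine Finset.card_bij' (fun k _ => (k : ℕ)) (fun a ha => ⟨a, lt_of_lt_of_le (Finset.mem_range.mp ha) hc⟩) ?_ ?_ ?_ ?_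
  · intro k hk
    exact Finset.mem_range.mpr (Finset.mem_filter.mp hk).2
  · intro a ha
    simp [Finset.mem_range.mp ha]
  · intro k hk
    rfl
  · intro a ha
    rfl

lemma hr_eq_left {t : ℝ} (ht : t ≤ 1/2) : hr t = 1/2 + t := by
  rcases lt_or_eq_of_le ht with h | h
  · rw [hr, if_pos h]
  · rw [hr, if_neg (by rw [h]; exact lt_irrefl _), h]; norm_num

lemma hr_eq_right {t : ℝ} (ht : 1/2 ≤ t) : hr t = 3/2 - t := by
  rw [hr, if_neg (not_lt.mpr ht)]

lemma integral_hr_pow (m : ℕ) :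
    ∫ t in Icc (0:ℝ) 1, (hr t) ^ m = 2 * (1 - (1/2:ℝ) ^ (m+1)) / (m+1) := by
  have key : ∫ u in (1/2 : ℝ)..1, u ^ m = (1 - (1/2:ℝ)^(m+1)) / (m+1) := by
    rw [integral_pow]
    norm_num
  have h1 : ∫ t in Ioc (0:ℝ) (1/2), (hr t) ^ m = (1 - (1/2:ℝ)^(m+1)) / (m+1) := by
    rw [setIntegral_congr_fun measurableSet_Ioc
      (g := fun t => (1/2 + t)^m) (fun t ht => by rw [hr_eq_left ht.2])]
    rw [← intervalIntegral.integral_of_le (by norm_num : (0:ℝ) ≤ 1/2)]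
    rw [show (fun t : ℝ => (1/2 + t)^m) = fun t : ℝ => (fun u : ℝ => u ^ m) (1/2 + t) from rfl]
    rw [intervalIntegral.integral_comp_add_left (fun u : ℝ => u ^ m) (1/2)]
    norm_num at key ⊢
  have h2 : ∫ t in Ioc (1/2 : ℝ) 1, (hr t) ^ m = (1 - (1/2:ℝ)^(m+1)) / (m+1) := by
    rw [setIntegral_congr_fun measurableSet_Ioc
      (g := fun t => (3/2 - t)^m) (fun t ht => by rw [hr_eq_right (le_of_lt ht.1)])]
    rw [← intervalIntegral.integral_of_le (by norm_num : (1/2:ℝ) ≤ 1)]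
    rw [show (fun t : ℝ => (3/2 - t)^m) = fun t : ℝ => (fun u : ℝ => u ^ m) (3/2 - t) from rfl]
    rw [intervalIntegral.integral_comp_sub_left (fun u : ℝ => u ^ m) (3/2)]
    norm_num at key ⊢
  have hint1 : IntegrableOn (fun t => (hr t)^m) (Ioc (0:ℝ) (1/2)) volume := by
    refine IntegrableOn.congr_fun (f := fun t : ℝ => (1/2 + t)^m)
      (((continuous_const.add continuous_id).pow m).integrableOn_Ioc)
      (fun t ht => by rw [hr_eq_left ht.2]) measurableSet_Ioc
  have hint2 : IntegrableOn (fun t => (hr t)^m) (Ioc (1/2:ℝ) 1) volume := by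
    refine IntegrableOn.congr_fun (f := fun t : ℝ => (3/2 - t)^m)
      (((continuous_const.sub continuous_id).pow m).integrableOn_Ioc)
      (fun t ht => by rw [hr_eq_right (le_of_lt ht.1)]) measurableSet_Ioc
  rw [integral_Icc_eq_integral_Ioc,
    show Ioc (0:ℝ) 1 = Ioc 0 (1/2) ∪ Ioc (1/2) 1 from
      (Set.Ioc_union_Ioc_eq_Ioc (by norm_num) (by norm_num)).symm,
    setIntegral_union (Set.Ioc_disjoint_Ioc_of_le le_rfl) measurableSet_Ioc hint1 hint2, h1, h2]
  ring

lemma integrable_ind (n : ℕ) (i : Fin n) :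
    Integrable (fun ω => if ω ∈ Ev n i then (1:ℝ) else 0) (Measure.pi fun _ => unif) := by
  have : (fun ω => if ω ∈ Ev n i then (1:ℝ) else 0) = (Ev n i).indicator (fun _ => 1) := by
    funext ω; simp [Set.indicator_apply]
  rw [this]
  rw [integrable_indicator_iff (Ev_meas n i)]
  exact (integrableOn_const_iff).mpr (Or.inr (measure_lt_top _ _))

lemma factor_eq (c1 c2 : Prop) [Decidable c1] [Decidable c2] :
    (if c1 then (if c2 then (1:ℝ) else 0) else 1) = if (c1 → c2) then 1 else 0 := by
  by_cases h1 : c1 <;> by_cases h2 : c2 <;> simp [h1, h2]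

lemma integral_Ev (n : ℕ) (i : Fin n) :
    ∫ ω : Fin n → ℝ, (if ω ∈ Ev n i then (1:ℝ) else 0) ∂(Measure.pi fun _ => unif)
      = 2 * (1 - (1/2:ℝ) ^ ((i:ℕ)+1)) / ((i:ℕ)+1) := by
  rcases n with _ | m
  · exact i.elim0
  set e := MeasurableEquiv.piFinSuccAbove (fun _ : Fin (m+1) => ℝ) i with he
  have hmp := measurePreserving_piFinSuccAbove (fun _ : Fin (m+1) => unif) i
  set F : (Fin (m+1) → ℝ) → ℝ := fun ω => if ω ∈ Ev (m+1) i then (1:ℝ) else 0 with hF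
  have hFint : Integrable F (Measure.pi fun _ => unif) := integrable_ind (m+1) i
  -- pointwise product form
  have hpt : ∀ (t : ℝ) (y : Fin m → ℝ),
      F (Fin.insertNth i t y) = (if t ∈ Icc (0:ℝ) 1 then 1 else 0)
        * ∏ k : Fin m, (if (k:ℕ) < (i:ℕ) then cInd t (y k) else 1) := by
    intro t y
    have hmem : Fin.insertNth i t y ∈ Ev (m+1) i ↔
        (t ∈ Icc (0:ℝ) 1 ∧ ∀ k : Fin m, (k:ℕ) < (i:ℕ) →
          ((y k < 1/2 → y k < t) ∧ (1/2 ≤ y k → t < y k))) := by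
      simp only [Ev, mem_setOf_eq, Fin.insertNth_apply_same]
      constructor
      · rintro ⟨h0, hC⟩
        refine ⟨h0, fun k hk => ?_⟩
        have hlt : i.succAbove k < i := by
          rw [Fin.succAbove_lt_iff_castSucc_lt]
          exact hk
        have := hC (i.succAbove k) hlt
        rwa [Fin.insertNth_apply_succAbove] at this
      · rintro ⟨h0, hC⟩
        refine ⟨h0, fun j hj => ?_⟩
        obtain ⟨k, rfl⟩ := Fin.exists_succAbove_eq (hj.ne : j ≠ i)
        rw [Fin.insertNth_apply_succAbove]
        exact hC k (by rwa [Fin.succAbove_lt_iff_castSucc_lt] at hj)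
    rw [hF]
    simp only [hmem]
    have : ∏ k : Fin m, (if (k:ℕ) < (i:ℕ) then cInd t (y k) else 1)
        = if (∀ k : Fin m, (k:ℕ) < (i:ℕ) →
            ((y k < 1/2 → y k < t) ∧ (1/2 ≤ y k → t < y k))) then (1:ℝ) else 0 := by
      rw [show (fun k : Fin m => if (k:ℕ) < (i:ℕ) then cInd t (y k) else 1)
          = fun k : Fin m => if ((k:ℕ) < (i:ℕ) →
              ((y k < 1/2 → y k < t) ∧ (1/2 ≤ y k → t < y k))) then (1:ℝ) else 0 from
        funext fun k => by rw [cInd, factor_eq]]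
      rw [Finset.prod_boole]
      simp
    rw [this]
    by_cases h1 : t ∈ Icc (0:ℝ) 1 <;>
      by_cases h2 : (∀ k : Fin m, (k:ℕ) < (i:ℕ) →
          ((y k < 1/2 → y k < t) ∧ (1/2 ≤ y k → t < y k))) <;>
      simp [h1, h2]
  have hsymm := hmp.symm
  have hInt2 : Integrable (fun z : ℝ × (Fin m → ℝ) => F (e.symm z))
      (unif.prod (Measure.pi fun _ : Fin m => unif)) := by
    have := (hsymm.integrable_comp_emb (MeasurableEquiv.measurableEmbedding e.symm)).mpr hFint
    exact this
  have hstep1 : ∫ ω : Fin (m+1) → ℝ, F ω ∂(Measure.pi fun _ => unif)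
      = ∫ z : ℝ × (Fin m → ℝ), F (e.symm z) ∂(unif.prod (Measure.pi fun _ : Fin m => unif)) :=
    (hsymm.integral_comp' F).symm
  have hinner : ∀ t : ℝ, (∫ y : Fin m → ℝ,
        ∏ k : Fin m, (if (k:ℕ) < (i:ℕ) then cInd t (y k) else 1)
        ∂(Measure.pi fun _ => unif)) = (∫ s, cInd t s ∂unif) ^ (i:ℕ) := by
    intro t
    rw [integral_pi_prod (μ := unif) (f := fun (k : Fin m) (s : ℝ) => if (k:ℕ) < (i:ℕ) then cInd t s else 1)]
    have heach : ∀ k : Fin m, (∫ s, (if (k:ℕ) < (i:ℕ) then cInd t s else 1) ∂unif)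
        = if (k:ℕ) < (i:ℕ) then (∫ s, cInd t s ∂unif) else 1 := by
      intro k
      by_cases hk : (k:ℕ) < (i:ℕ)
      · simp [hk]
      · simp [hk]
    simp only [heach]
    rw [Finset.prod_ite, Finset.prod_const, Finset.prod_const, one_pow, mul_one,
      card_filter_lt m i (Nat.lt_succ_iff.mp i.isLt)]
  calc ∫ ω : Fin (m+1) → ℝ, F ω ∂(Measure.pi fun _ => unif)
      = ∫ z : ℝ × (Fin m → ℝ), F (e.symm z) ∂(unif.prod (Measure.pi fun _ : Fin m => unif)) :=
        hstep1
    _ = ∫ t : ℝ, (∫ y : Fin m → ℝ, F (e.symm (t, y)) ∂(Measure.pi fun _ : Fin m => unif)) ∂unif :=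
        MeasureTheory.integral_prod _ hInt2
    _ = ∫ t : ℝ, (if t ∈ Icc (0:ℝ) 1 then 1 else 0) * (∫ s, cInd t s ∂unif) ^ (i:ℕ) ∂unif := by
        congr 1
        funext t
        have : ∀ y : Fin m → ℝ, F (e.symm (t, y)) = F (Fin.insertNth i t y) := by
          intro y
          rfl
        simp only [this, hpt]
        rw [MeasureTheory.integral_const_mul, hinner t]
    _ = ∫ t in Icc (0:ℝ) 1, (hr t) ^ (i:ℕ) ∂volume := by
        rw [show unif = volume.restrict (Icc 0 1) from rfl]
        refine setIntegral_congr_fun measurableSet_Icc (fun t ht => ?_)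
        rw [if_pos ht, one_mul]
        exact congrArg (fun r : ℝ => r ^ (i:ℕ)) (integral_cInd ht)
    _ = 2 * (1 - (1/2:ℝ) ^ ((i:ℕ)+1)) / ((i:ℕ)+1) := integral_hr_pow (i:ℕ)

lemma expectation_eq (n : ℕ) :
    (∫ ω : Fin n → ℝ,
        (({i : Fin n | ω i ∈ uncertainRegion1 {x | ∃ j : Fin n, j < i ∧ ω j = x}
            (fun x => if x < 1 / 2 then (-1 : ℝ) else 1)}).ncard : ℝ)
        ∂(Measure.pi fun _ => unif))
      = ∑ k ∈ Finset.range n, 2 * (1 - (1/2:ℝ)^(k+1)) / ((k:ℝ)+1) := by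
  have h1 : ∀ ω : Fin n → ℝ,
      (({i : Fin n | ω i ∈ uncertainRegion1 {x | ∃ j : Fin n, j < i ∧ ω j = x}
          (fun x => if x < 1 / 2 then (-1 : ℝ) else 1)}).ncard : ℝ)
        = ∑ i : Fin n, (if ω ∈ Ev n i then (1:ℝ) else 0) := by
    intro ω
    rw [Set.ncard_eq_toFinset_card', Set.toFinset_setOf, Finset.card_filter]
    push_cast
    exact Finset.sum_congr rfl (fun i _ => by rw [if_congr (memU_iff n ω i) rfl rfl])
  simp only [h1]
  rw [integral_finset_sum _ (fun i _ => integrable_ind n i)]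
  simp only [integral_Ev]
  exact Fin.sum_univ_eq_sum_range (fun k => 2 * (1 - (1/2:ℝ)^(k+1)) / ((k:ℝ)+1)) n

/-- Theorem 6, case `p = 1`: for i.i.d. uniform points and `f̃ = -1` iff `x < 1/2`,
the expected adaptive Monte Carlo evaluation count
`M_n = card{i ≤ n : X_i ∈ U({X_1,…,X_{i-1}}, f̃)}` satisfies
`lim_{n→∞} (E[M_n] - 2 ln n) = 2 (γ - ln 2)`. -/
theorem adaptive_monte_carlo_eval_count_dim_one :
    Tendsto (fun n : ℕ =>
        (∫ ω : Fin n → ℝ,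
          (({i : Fin n | ω i ∈ uncertainRegion1 {x | ∃ j : Fin n, j < i ∧ ω j = x}
              (fun x => if x < 1 / 2 then (-1 : ℝ) else 1)}).ncard : ℝ)
          ∂(Measure.pi fun _ => unif))
        - 2 * Real.log n)
      atTop (nhds (2 * (Real.eulerMascheroniConstant - Real.log 2))) := by
  have hH : Tendsto (fun n : ℕ => (∑ k ∈ Finset.range n, ((k:ℝ)+1)⁻¹) - Real.log n)
      atTop (nhds Real.eulerMascheroniConstant) := by
    have h := Real.tendsto_harmonic_sub_log
    refine h.congr (fun n => ?_)
    congr 1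
    rw [harmonic]
    push_cast
    rfl
  have hS : Tendsto (fun n : ℕ => ∑ k ∈ Finset.range n, ((1:ℝ)/2)^(k+1)/((k:ℝ)+1))
      atTop (nhds (Real.log 2)) := by
    have h := (Real.hasSum_pow_div_log_of_abs_lt_one
      (x := (1/2:ℝ)) (by rw [abs_of_pos (by norm_num)]; norm_num)).tendsto_sum_nat
    have heq : -Real.log (1 - 1/2) = Real.log 2 := by
      rw [show (1:ℝ) - 1/2 = 2⁻¹ by norm_num, Real.log_inv, neg_neg]
    rw [heq] at h
    refine h.congr (fun n => Finset.sum_congr rfl (fun k _ => by norm_num)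
      : ∀ n, _ = _)
  have heq : ∀ n : ℕ, (∑ k ∈ Finset.range n, 2 * (1 - (1/2:ℝ)^(k+1)) / ((k:ℝ)+1))
        - 2 * Real.log n
      = 2 * ((∑ k ∈ Finset.range n, ((k:ℝ)+1)⁻¹) - Real.log n)
        - 2 * (∑ k ∈ Finset.range n, ((1:ℝ)/2)^(k+1)/((k:ℝ)+1)) := by
    intro n
    have hterm : ∀ k : ℕ, 2 * (1 - (1/2:ℝ)^(k+1)) / ((k:ℝ)+1)
        = 2 * ((k:ℝ)+1)⁻¹ - 2 * (((1:ℝ)/2)^(k+1)/((k:ℝ)+1)) := by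
      intro k
      have hk : ((k:ℝ)+1) ≠ 0 := by positivity
      field_simp
    rw [Finset.sum_congr rfl (fun k _ => hterm k), Finset.sum_sub_distrib,
      ← Finset.mul_sum, ← Finset.mul_sum]
    ring
  have hmain : Tendsto (fun n : ℕ =>
      (∑ k ∈ Finset.range n, 2 * (1 - (1/2:ℝ)^(k+1)) / ((k:ℝ)+1)) - 2 * Real.log n)
      atTop (nhds (2 * (Real.eulerMascheroniConstant - Real.log 2))) := by
    simp only [heq]
    have := (hH.const_mul 2).sub (hS.const_mul 2)
    rw [show 2 * (Real.eulerMascheroniConstant - Real.log 2)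
      = 2 * Real.eulerMascheroniConstant - 2 * Real.log 2 by ring]
    exact this
  refine hmain.congr (fun n => ?_)
  rw [expectation_eq n]
end

section
/- Let p ≥ 1 and g ≥ 1 be integers and let f ∈ Ω be monotone. Define the number of functional evaluations of the grouped-adaptive inner grid design after g refinement stages as m_GI(g) = Σ_{l=1}^g card( I_l ∩ U(I_{l−1}, f) ), where I_0 = ∅. Then m_GI(g) = Σ_{l=1}^g ( (2^l − 1)^p − (2^l − 2)^p ), and in particular m_GI(g) does not depend on f. -/
open MeasureTheory Set

/-- The inner grid `{i/m : i = 1, …, m-1}^p`; `innerDyGrid p (2^l)` is the dyadic inner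
grid `I_l` with `(2^l - 1)^p` points (so `I_0 = ∅` when `p ≥ 1`). -/
def innerDyGrid (p m : ℕ) : Set (Fin p → ℝ) :=
  {x | ∀ k, ∃ i : ℕ, 1 ≤ i ∧ i < m ∧ x k = (i : ℝ) / (m : ℝ)}

namespace GAIGaux

/-- real grid point of integer vector `j` at denominator `m` -/
noncomputable def pt (p m : ℕ) (j : Fin p → ℕ) : Fin p → ℝ := fun k => (j k : ℝ) / m

lemma div_le_div_iff_nat {a b m n : ℕ} (hm : 0 < m) (hn : 0 < n) :
    (a : ℝ) / m ≤ (b : ℝ) / n ↔ a * n ≤ b * m := by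
  rw [div_le_div_iff₀ (by exact_mod_cast hm) (by exact_mod_cast hn)]
  exact_mod_cast Iff.rfl

lemma pt_mem_Icc {p m : ℕ} (hm : 0 < m) {j : Fin p → ℕ} (hj : ∀ k, j k ≤ m) :
    pt p m j ∈ Set.Icc (0 : Fin p → ℝ) 1 := by
  have hm' : (0:ℝ) < m := by exact_mod_cast hm
  rw [Set.mem_Icc]
  constructor
  · apply Pi.le_def.mpr
    intro k
    simp only [Pi.zero_apply, pt]
    positivity
  · apply Pi.le_def.mpr
    intro k
    simp only [Pi.one_apply, pt]
    rw [div_le_one hm']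
    exact_mod_cast hj k

lemma pt_le_pt {p m : ℕ} (hm : 0 < m) {i j : Fin p → ℕ} (h : ∀ k, i k ≤ j k) :
    pt p m i ≤ pt p m j := by
  apply Pi.le_def.mpr
  intro k
  have hm' : (0:ℝ) < m := by exact_mod_cast hm
  show (i k : ℝ) / m ≤ (j k : ℝ) / m
  gcongr
  exact_mod_cast h k

lemma pt_inj {p m : ℕ} (hm : 0 < m) {i j : Fin p → ℕ} (h : pt p m i = pt p m j) : i = j := by
  funext k
  have := congrFun h k
  simp only [pt] at this
  have hm' : (0:ℝ) < m := by exact_mod_cast hm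
  have h2 : (i k : ℝ) = j k := by
    field_simp at this
    exact_mod_cast this
  exact_mod_cast h2

open Classical in
/-- the extended sign function on `{0,…,N}^p` -/
noncomputable def Gfun (p N : ℕ) (f : (Fin p → ℝ) → ℝ) (j : Fin p → ℕ) : ℤ :=
  if ∃ k, j k = N then 1
  else if ∃ k, j k = 0 then -1
  else if f (pt p N j) = 1 then 1 else -1

lemma Gfun_pm (p N : ℕ) (f : (Fin p → ℝ) → ℝ) (j : Fin p → ℕ) :
    Gfun p N f j = -1 ∨ Gfun p N f j = 1 := by
  unfold Gfun; split_ifs <;> simp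

lemma Gfun_top {p N : ℕ} {f : (Fin p → ℝ) → ℝ} {j : Fin p → ℕ} (h : ∃ k, j k = N) :
    Gfun p N f j = 1 := by
  unfold Gfun; rw [if_pos h]

lemma Gfun_bot {p N : ℕ} {f : (Fin p → ℝ) → ℝ} {j : Fin p → ℕ}
    (h1 : ¬ ∃ k, j k = N) (h2 : ∃ k, j k = 0) :
    Gfun p N f j = -1 := by
  unfold Gfun; rw [if_neg h1, if_pos h2]

/-- on interior points G is ±1 according to f -/
lemma Gfun_interior_eq_one {p N : ℕ} {f : (Fin p → ℝ) → ℝ} {j : Fin p → ℕ}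
    (h1 : ¬ ∃ k, j k = N) (h2 : ¬ ∃ k, j k = 0) :
    (Gfun p N f j = 1 ↔ f (pt p N j) = 1) := by
  unfold Gfun
  rw [if_neg h1, if_neg h2]
  split_ifs with h
  · simp [h]
  · simp [h]

lemma Gfun_interior_eq_neg {p N : ℕ} (hN : 0 < N) {f : (Fin p → ℝ) → ℝ}
    (hpm : ∀ x ∈ Set.Icc (0 : Fin p → ℝ) 1, f x = -1 ∨ f x = 1) {j : Fin p → ℕ}
    (hjN : ∀ k, j k ≤ N)
    (h1 : ¬ ∃ k, j k = N) (h2 : ¬ ∃ k, j k = 0) :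
    (Gfun p N f j = -1 ↔ f (pt p N j) = -1) := by
  have hmem := pt_mem_Icc hN hjN
  rcases hpm _ hmem with h | h
  · unfold Gfun
    rw [if_neg h1, if_neg h2, if_neg (by rw [h]; norm_num)]
    simp [h]
  · unfold Gfun
    rw [if_neg h1, if_neg h2, if_pos h]
    constructor
    · intro hh; norm_num at hh
    · intro hh; rw [h] at hh; norm_num at hh

lemma Gfun_mono {p N : ℕ} (hN : 0 < N) {f : (Fin p → ℝ) → ℝ}
    (hmono : MonotoneOn f (Set.Icc 0 1))
    (hpm : ∀ x ∈ Set.Icc (0 : Fin p → ℝ) 1, f x = -1 ∨ f x = 1)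
    {u v : Fin p → ℕ} (hv : ∀ k, v k ≤ N) (huv : ∀ k, u k ≤ v k) :
    Gfun p N f u ≤ Gfun p N f v := by
  have hu : ∀ k, u k ≤ N := fun k => le_trans (huv k) (hv k)
  have key : Gfun p N f u = 1 → Gfun p N f v = 1 := by
    intro h1
    by_cases hvN : ∃ k, v k = N
    · exact Gfun_top hvN
    by_cases huN : ∃ k, u k = N
    · obtain ⟨k, hk⟩ := huN
      exact absurd (⟨k, le_antisymm (hv k) (hk ▸ huv k)⟩ : ∃ k, v k = N) hvN
    by_cases hu0 : ∃ k, u k = 0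
    · rw [Gfun_bot huN hu0] at h1; norm_num at h1
    have hv0 : ¬ ∃ k, v k = 0 := by
      rintro ⟨k, hk⟩
      exact hu0 ⟨k, Nat.le_zero.mp (hk ▸ huv k)⟩
    rw [Gfun_interior_eq_one huN hu0] at h1
    rw [Gfun_interior_eq_one hvN hv0]
    have hle : f (pt p N u) ≤ f (pt p N v) :=
      hmono (pt_mem_Icc hN hu) (pt_mem_Icc hN hv) (pt_le_pt hN huv)
    rcases hpm _ (pt_mem_Icc hN hv) with h | h
    · rw [h1, h] at hle; norm_num at hle
    · exact h
  rcases Gfun_pm p N f u with h | h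
  · rcases Gfun_pm p N f v with h' | h' <;> rw [h, h'] <;> norm_num
  · rw [h, key h]


lemma mem_uncertainRegion_iff {p : ℕ} (D : Set (Fin p → ℝ)) (f : (Fin p → ℝ) → ℝ)
    (x : Fin p → ℝ) :
    x ∈ uncertainRegion p D f ↔ x ∈ Set.Icc (0 : Fin p → ℝ) 1 ∧
      ¬ (∃ y, (y ∈ D ∧ f y = -1) ∧ x ∈ Set.Icc 0 y) ∧
      ¬ (∃ y, (y ∈ D ∧ f y = 1) ∧ x ∈ Set.Icc y 1) := by
  simp only [uncertainRegion, Set.mem_diff, Set.mem_union, Set.mem_iUnion, Set.mem_setOf_eq,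
    Set.mem_sep_iff, not_or, exists_prop]


lemma covered_down_iff {p N : ℕ} (hN : 0 < N) {f : (Fin p → ℝ) → ℝ}
    (hmono : MonotoneOn f (Set.Icc 0 1))
    (hpm : ∀ x ∈ Set.Icc (0 : Fin p → ℝ) 1, f x = -1 ∨ f x = 1)
    {i : Fin p → ℕ} (hi : ∀ k, 1 ≤ i k ∧ i k ≤ 2 * N - 1) :
    (∃ y, (y ∈ innerDyGrid p N ∧ f y = -1) ∧ pt p (2 * N) i ∈ Set.Icc 0 y)
      ↔ Gfun p N f (fun k => (i k + 1) / 2) = -1 := by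
  have h2N : 0 < 2 * N := by omega
  have ha1 : ∀ k, 1 ≤ (i k + 1) / 2 := fun k => by have := (hi k).1; omega
  have haN : ∀ k, (i k + 1) / 2 ≤ N := fun k => by have := (hi k).2; omega
  have hnot0 : ¬ ∃ k, (i k + 1) / 2 = 0 := by
    rintro ⟨k, hk⟩; have := ha1 k; omega
  constructor
  · rintro ⟨y, ⟨hyD, hyf⟩, hxy⟩
    choose j hj1 hj2 hj3 using hyD
    have hy : y = pt p N j := funext fun k => hj3 k
    have hij : ∀ k, i k ≤ 2 * j k := by
      intro k
      have hk : (i k : ℝ) / ((2 * N : ℕ) : ℝ) ≤ (j k : ℝ) / (N : ℝ) := by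
        have := (Pi.le_def.mp hxy.2) k
        rw [hy] at this
        exact this
      rw [div_le_div_iff_nat h2N hN] at hk
      have h2 : i k * N ≤ (2 * j k) * N := by
        calc i k * N ≤ j k * (2 * N) := hk
        _ = (2 * j k) * N := by ring
      have := Nat.le_of_mul_le_mul_right h2 hN
      omega
    have haj : ∀ k, (i k + 1) / 2 ≤ j k := fun k => by have := hij k; omega
    have hnotN : ¬ ∃ k, (i k + 1) / 2 = N := by
      rintro ⟨k, hk⟩
      have := haj k; have := hj2 k; omega
    rw [Gfun_interior_eq_neg hN hpm haN hnotN hnot0]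
    have hjN : ∀ k, j k ≤ N := fun k => le_of_lt (hj2 k)
    have hle : f (pt p N (fun k => (i k + 1) / 2)) ≤ f y := by
      rw [hy]
      exact hmono (pt_mem_Icc hN haN) (pt_mem_Icc hN hjN) (pt_le_pt hN haj)
    rw [hyf] at hle
    rcases hpm _ (pt_mem_Icc hN haN) with h | h
    · exact h
    · rw [h] at hle; norm_num at hle
  · intro hG
    have hnotN : ¬ ∃ k, (i k + 1) / 2 = N := by
      intro h; rw [Gfun_top h] at hG; norm_num at hG
    have haN' : ∀ k, (i k + 1) / 2 < N := by
      intro k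
      have h1 := haN k
      have h2 : (i k + 1) / 2 ≠ N := fun hc => hnotN ⟨k, hc⟩
      omega
    have hfa := (Gfun_interior_eq_neg hN hpm haN hnotN hnot0).mp hG
    refine ⟨pt p N (fun k => (i k + 1) / 2), ⟨?_, hfa⟩, ?_, ?_⟩
    · intro k
      exact ⟨(i k + 1) / 2, ha1 k, haN' k, rfl⟩
    · exact (pt_mem_Icc h2N (fun k => by have := (hi k).2; omega)).1
    · apply Pi.le_def.mpr
      intro k
      show (i k : ℝ) / ((2 * N : ℕ) : ℝ) ≤ ((i k + 1) / 2 : ℕ) / (N : ℝ)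
      rw [div_le_div_iff_nat h2N hN]
      calc i k * N ≤ (2 * ((i k + 1) / 2)) * N := by
            have : i k ≤ 2 * ((i k + 1) / 2) := by omega
            exact Nat.mul_le_mul_right N this
        _ = ((i k + 1) / 2) * (2 * N) := by ring

lemma covered_up_iff {p N : ℕ} (hN : 0 < N) {f : (Fin p → ℝ) → ℝ}
    (hmono : MonotoneOn f (Set.Icc 0 1))
    (hpm : ∀ x ∈ Set.Icc (0 : Fin p → ℝ) 1, f x = -1 ∨ f x = 1)
    {i : Fin p → ℕ} (hi : ∀ k, 1 ≤ i k ∧ i k ≤ 2 * N - 1) :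
    (∃ y, (y ∈ innerDyGrid p N ∧ f y = 1) ∧ pt p (2 * N) i ∈ Set.Icc y 1)
      ↔ Gfun p N f (fun k => i k / 2) = 1 := by
  have h2N : 0 < 2 * N := by omega
  have hbN : ∀ k, i k / 2 ≤ N - 1 := fun k => by have := (hi k).2; omega
  have hnotN : ¬ ∃ k, i k / 2 = N := by
    rintro ⟨k, hk⟩; have := hbN k; omega
  constructor
  · rintro ⟨y, ⟨hyD, hyf⟩, hxy⟩
    choose j hj1 hj2 hj3 using hyD
    have hy : y = pt p N j := funext fun k => hj3 k
    have hij : ∀ k, 2 * j k ≤ i k := by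
      intro k
      have hk : (j k : ℝ) / (N : ℝ) ≤ (i k : ℝ) / ((2 * N : ℕ) : ℝ) := by
        have := (Pi.le_def.mp hxy.1) k
        rw [hy] at this
        exact this
      rw [div_le_div_iff_nat hN h2N] at hk
      have h2 : (2 * j k) * N ≤ i k * N := by
        calc (2 * j k) * N = j k * (2 * N) := by ring
        _ ≤ i k * N := hk
      have := Nat.le_of_mul_le_mul_right h2 hN
      omega
    have hbj : ∀ k, j k ≤ i k / 2 := fun k => by have := hij k; omega
    have hnot0 : ¬ ∃ k, i k / 2 = 0 := by
      rintro ⟨k, hk⟩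
      have := hbj k; have := hj1 k; omega
    rw [Gfun_interior_eq_one hnotN hnot0]
    have hjN : ∀ k, j k ≤ N := fun k => le_of_lt (hj2 k)
    have hbN' : ∀ k, i k / 2 ≤ N := fun k => le_trans (hbN k) (Nat.sub_le N 1)
    have hle : f y ≤ f (pt p N (fun k => i k / 2)) := by
      rw [hy]
      exact hmono (pt_mem_Icc hN hjN) (pt_mem_Icc hN hbN') (pt_le_pt hN hbj)
    rw [hyf] at hle
    rcases hpm _ (pt_mem_Icc hN hbN') with h | h
    · rw [h] at hle; norm_num at hle
    · exact h
  · intro hG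
    have hnot0 : ¬ ∃ k, i k / 2 = 0 := by
      intro h; rw [Gfun_bot hnotN h] at hG; norm_num at hG
    have hb1 : ∀ k, 1 ≤ i k / 2 := by
      intro k
      have : i k / 2 ≠ 0 := fun hc => hnot0 ⟨k, hc⟩
      omega
    have hbN' : ∀ k, i k / 2 ≤ N := fun k => le_trans (hbN k) (Nat.sub_le N 1)
    have hfb := (Gfun_interior_eq_one hnotN hnot0).mp hG
    refine ⟨pt p N (fun k => i k / 2), ⟨?_, hfb⟩, ?_, ?_⟩
    · intro k
      refine ⟨i k / 2, hb1 k, ?_, rfl⟩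
      have := hbN k; omega
    · apply Pi.le_def.mpr
      intro k
      show ((i k / 2 : ℕ) : ℝ) / (N : ℝ) ≤ (i k : ℝ) / ((2 * N : ℕ) : ℝ)
      rw [div_le_div_iff_nat hN h2N]
      calc (i k / 2) * (2 * N) = (2 * (i k / 2)) * N := by ring
        _ ≤ i k * N := by
            have : 2 * (i k / 2) ≤ i k := by omega
            exact Nat.mul_le_mul_right N this
    · exact (pt_mem_Icc h2N (fun k => by have := (hi k).2; omega)).2



lemma count_lemma (p M : ℕ) (hM : 1 ≤ M) (H : (Fin p → ℕ) → ℤ)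
    (Hmono : ∀ i j : Fin p → ℕ, (∀ k, j k ≤ M) → (∀ k, i k ≤ j k) → H i ≤ H j)
    (Hpm : ∀ i : Fin p → ℕ, (∀ k, i k ≤ M) → H i = -1 ∨ H i = 1)
    (Htop : ∀ i : Fin p → ℕ, (∀ k, i k ≤ M) → (∃ k, i k = M) → H i = 1)
    (Hbot : ∀ i : Fin p → ℕ, (∀ k, i k ≤ M - 1) → (∃ k, i k = 0) → H i = -1) :
    (Finset.filter (fun i => H i = 1 ∧ H (fun k => i k - 1) = -1)
      (Fintype.piFinset (fun _ : Fin p => Finset.Icc 1 M))).card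
      = M ^ p - (M - 1) ^ p := by
  classical
  set P1 := Fintype.piFinset (fun _ : Fin p => Finset.Icc 1 M) with hP1
  set P0 := Fintype.piFinset (fun _ : Fin p => Finset.Icc 0 (M - 1)) with hP0
  set Pm := Fintype.piFinset (fun _ : Fin p => Finset.Icc 1 (M - 1)) with hPm
  have hPmP1 : Pm ⊆ P1 := by
    intro i hi
    simp only [hPm, hP1, Fintype.mem_piFinset, Finset.mem_Icc] at *
    exact fun k => ⟨(hi k).1, le_trans (hi k).2 (Nat.sub_le M 1)⟩
  have hPmP0 : Pm ⊆ P0 := by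
    intro i hi
    simp only [hPm, hP0, Fintype.mem_piFinset, Finset.mem_Icc] at *
    exact fun k => ⟨Nat.zero_le _, (hi k).2⟩
  have cP1 : P1.card = M ^ p := by
    simp [hP1, Fintype.card_piFinset, Nat.card_Icc]
  have cP0 : P0.card = M ^ p := by
    have : M - 1 + 1 - 0 = M := by omega
    simp [hP0, Fintype.card_piFinset, Nat.card_Icc, this]
  have cPm : Pm.card = (M - 1) ^ p := by
    simp [hPm, Fintype.card_piFinset, Nat.card_Icc]
  have hple : (M - 1) ^ p ≤ M ^ p := Nat.pow_le_pow_left (Nat.sub_le M 1) p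
  set A : ℤ := ((M ^ p - (M - 1) ^ p : ℕ) : ℤ) with hA
  set pred : (Fin p → ℕ) → Prop := fun i => H i = 1 ∧ H (fun k => i k - 1) = -1 with hpred
  clear_value pred A P1 P0 Pm
  -- step 1
  have h1 : ∑ i ∈ P1, (H i - H (fun k => i k - 1)) = 2 * ((Finset.filter pred P1).card : ℤ) := by
    rw [← Finset.sum_filter_add_sum_filter_not P1 pred]
    have e1 : ∑ i ∈ Finset.filter pred P1, (H i - H (fun k => i k - 1))
        = ∑ i ∈ Finset.filter pred P1, 2 := by
      apply Finset.sum_congr rfl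
      intro i hi
      rw [Finset.mem_filter, hpred] at hi
      obtain ⟨-, h1, h2⟩ := hi
      rw [h1, h2]; ring
    have e2 : ∑ i ∈ Finset.filter (fun i => ¬ pred i) P1, (H i - H (fun k => i k - 1)) = 0 := by
      apply Finset.sum_eq_zero
      intro i hi
      rw [Finset.mem_filter] at hi
      obtain ⟨hiP, hnp⟩ := hi
      have hiM : ∀ k, i k ≤ M := by
        intro k
        rw [hP1] at hiP
        have := (Fintype.mem_piFinset.mp hiP) k
        exact (Finset.mem_Icc.mp this).2
      have hm : H (fun k => i k - 1) ≤ H i := Hmono _ _ hiM (fun k => Nat.sub_le _ _)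
      have v1 := Hpm i hiM
      have v2 := Hpm (fun k => i k - 1) (fun k => le_trans (Nat.sub_le _ _) (hiM k))
      rcases v1 with v1 | v1 <;> rcases v2 with v2 | v2 <;>
        simp [hpred, v1, v2] at hnp hm ⊢ <;> omega
    rw [e1, e2, Finset.sum_const, add_zero]; push_cast; ring
  -- step 2
  have h2 : ∑ i ∈ P1, H (fun k => i k - 1) = ∑ j ∈ P0, H j := by
    refine Finset.sum_nbij' (fun a => fun k => a k - 1) (fun a => fun k => a k + 1) ?_ ?_ ?_ ?_ ?_
    · intro a ha
      simp only [hP1, hP0, Fintype.mem_piFinset, Finset.mem_Icc] at ha ⊢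
      intro k; have := ha k; clear * - this hM; omega
    · intro a ha
      simp only [hP1, hP0, Fintype.mem_piFinset, Finset.mem_Icc] at ha ⊢
      intro k; have := ha k; clear * - this hM; omega
    · intro a ha
      simp only [hP1, Fintype.mem_piFinset, Finset.mem_Icc] at ha
      funext k; have := ha k; clear * - this; show a k - 1 + 1 = a k; omega
    · intro a ha; funext k; clear * -; show a k + 1 - 1 = a k; omega
    · intro a ha; rfl
  -- step 3
  have h3 : ∑ i ∈ P1, H i = ∑ i ∈ Pm, H i + A := by
    rw [← Finset.sum_sdiff hPmP1]
    have : ∑ i ∈ P1 \ Pm, H i = ∑ i ∈ P1 \ Pm, 1 := by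
      apply Finset.sum_congr rfl
      intro i hi
      rw [Finset.mem_sdiff] at hi
      obtain ⟨hi1, hi2⟩ := hi
      simp only [hP1, hPm, Fintype.mem_piFinset, Finset.mem_Icc, not_forall] at hi1 hi2
      obtain ⟨k, hk⟩ := hi2
      have h1k := hi1 k
      have hkM : i k = M := by clear * - h1k hk; omega
      exact Htop i (fun k => (hi1 k).2) ⟨k, hkM⟩
    rw [this, Finset.sum_const, nsmul_eq_mul, Finset.card_sdiff_of_subset hPmP1, cP1, cPm, hA, Nat.cast_sub hple]
    push_cast
    clear * -
    linarith
  have h4 : ∑ i ∈ P0, H i = ∑ i ∈ Pm, H i - A := by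
    rw [← Finset.sum_sdiff hPmP0]
    have : ∑ i ∈ P0 \ Pm, H i = ∑ i ∈ P0 \ Pm, (-1 : ℤ) := by
      apply Finset.sum_congr rfl
      intro i hi
      rw [Finset.mem_sdiff] at hi
      obtain ⟨hi1, hi2⟩ := hi
      simp only [hP0, hPm, Fintype.mem_piFinset, Finset.mem_Icc, not_forall] at hi1 hi2
      obtain ⟨k, hk⟩ := hi2
      have h1k := hi1 k
      have hkM : i k = 0 := by clear * - h1k hk; omega
      exact Hbot i (fun k => (hi1 k).2) ⟨k, hkM⟩
    rw [this, Finset.sum_const, nsmul_eq_mul, Finset.card_sdiff_of_subset hPmP0, cP0, cPm, hA, Nat.cast_sub hple]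
    push_cast
    clear * -
    linarith
  have key : 2 * ((Finset.filter pred P1).card : ℤ) = 2 * A := by
    rw [← h1, Finset.sum_sub_distrib, h2, h3, h4]; ring
  have h5 : ((Finset.filter pred P1).card : ℤ) = ((M ^ p - (M - 1) ^ p : ℕ) : ℤ) := by
    rw [hA] at key; linarith
  rw [hpred] at h5
  have h6 := Nat.cast_inj.mp h5
  convert h6 using 3

lemma per_stage (p N : ℕ) (hN : 1 ≤ N)
    (f : (Fin p → ℝ) → ℝ) (hf : f ∈ OmegaSet p) :
    (innerDyGrid p (2 * N) ∩ uncertainRegion p (innerDyGrid p N) f).ncard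
      = (2 * N - 1) ^ p - (2 * N - 2) ^ p := by
  classical
  obtain ⟨hmono, hpm⟩ := hf
  have hN0 : 0 < N := hN
  have h2N : 0 < 2 * N := by omega
  set M := 2 * N - 1 with hMdef
  have hM : 1 ≤ M := by omega
  set H : (Fin p → ℕ) → ℤ := fun i => Gfun p N f (fun k => (i k + 1) / 2) with hH
  have hchar : ∀ i : Fin p → ℕ, (∀ k, 1 ≤ i k ∧ i k ≤ M) →
      (pt p (2 * N) i ∈ uncertainRegion p (innerDyGrid p N) f ↔
        (H i = 1 ∧ H (fun k => i k - 1) = -1)) := by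
    intro i hi
    have hi' : ∀ k, 1 ≤ i k ∧ i k ≤ 2 * N - 1 := by intro k; have := hi k; omega
    have hmem : pt p (2 * N) i ∈ Set.Icc (0 : Fin p → ℝ) 1 :=
      pt_mem_Icc h2N (fun k => by have := (hi' k).2; omega)
    have hb : (fun k => ((fun k' => i k' - 1) k + 1) / 2) = (fun k => i k / 2) := by
      funext k; have := (hi' k).1
      show (i k - 1 + 1) / 2 = i k / 2
      clear * - this; omega
    have hHi : H i = Gfun p N f (fun k => (i k + 1) / 2) := rfl
    have hHb : H (fun k => i k - 1) = Gfun p N f (fun k => i k / 2) := by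
      rw [hH]; exact congrArg (Gfun p N f) hb
    rw [mem_uncertainRegion_iff, covered_down_iff hN0 hmono hpm hi',
      covered_up_iff hN0 hmono hpm hi', hHi, hHb]
    constructor
    · rintro ⟨-, hnd, hnu⟩
      constructor
      · rcases Gfun_pm p N f (fun k => (i k + 1) / 2) with h | h
        · exact absurd h hnd
        · exact h
      · rcases Gfun_pm p N f (fun k => i k / 2) with h | h
        · exact h
        · exact absurd h hnu
    · rintro ⟨h1, h2⟩
      exact ⟨hmem, by rw [h1]; norm_num, by rw [h2]; norm_num⟩
  have hset : innerDyGrid p (2 * N) ∩ uncertainRegion p (innerDyGrid p N) f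
      = ↑((Finset.filter (fun i => H i = 1 ∧ H (fun k => i k - 1) = -1)
          (Fintype.piFinset (fun _ : Fin p => Finset.Icc 1 M))).image (pt p (2 * N))) := by
    ext x
    simp only [Finset.coe_image, Set.mem_image, Finset.mem_coe, Finset.mem_filter,
      Fintype.mem_piFinset, Finset.mem_Icc, Set.mem_inter_iff]
    constructor
    · rintro ⟨hgrid, hU⟩
      choose j hj1 hj2 hj3 using hgrid
      have hx : x = pt p (2 * N) j := funext fun k => hj3 k
      have hjM : ∀ k, 1 ≤ j k ∧ j k ≤ M := fun k => ⟨hj1 k, by have := hj2 k; omega⟩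
      refine ⟨j, ⟨fun k => hjM k, ?_⟩, hx.symm⟩
      rw [hx] at hU
      exact (hchar j hjM).mp hU
    · rintro ⟨j, ⟨hj, hpred⟩, rfl⟩
      have hj' : ∀ k, 1 ≤ j k ∧ j k ≤ M := hj
      constructor
      · intro k; exact ⟨j k, (hj' k).1, by have := (hj' k).2; omega, rfl⟩
      · exact (hchar j hj').mpr hpred
  rw [hset, Set.ncard_coe_finset,
    Finset.card_image_of_injOn (fun a _ b _ h => pt_inj h2N h)]
  have hcount := count_lemma p M hM H ?_ ?_ ?_ ?_
  · rw [hcount, show M - 1 = 2 * N - 2 from by clear * - hMdef hN; omega, hMdef]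
  · intro u v hvM huv
    apply Gfun_mono hN0 hmono hpm
    · intro k; have := hvM k; omega
    · intro k; have := huv k; omega
  · intro i _
    exact Gfun_pm p N f _
  · rintro i hiM ⟨k, hk⟩
    apply Gfun_top
    refine ⟨k, ?_⟩
    rw [hk]; omega
  · rintro i hiM ⟨k, hk⟩
    apply Gfun_bot
    · rintro ⟨k', hk'⟩
      have := hiM k'
      omega
    · exact ⟨k, by rw [hk]⟩

end GAIGaux

/-- Theorem 8: the number of evaluations of the grouped-adaptive inner grid design after
`g` stages, `m_GI(g) = Σ_{l=1}^g card(I_l ∩ U(I_{l-1}, f))`, equals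
`Σ_{l=1}^g ((2^l - 1)^p - (2^l - 2)^p)` (independently of `f`). -/
theorem grouped_adaptive_inner_grid_eval_count (p g : ℕ) (hp : 1 ≤ p) (hg : 1 ≤ g)
    (f : (Fin p → ℝ) → ℝ) (hf : f ∈ OmegaSet p) :
    ∑ l ∈ Finset.Icc 1 g,
        (innerDyGrid p (2 ^ l) ∩ uncertainRegion p (innerDyGrid p (2 ^ (l - 1))) f).ncard
      = ∑ l ∈ Finset.Icc 1 g, ((2 ^ l - 1) ^ p - (2 ^ l - 2) ^ p) := by
  apply Finset.sum_congr rfl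
  intro l hl
  have hl1 : 1 ≤ l := (Finset.mem_Icc.mp hl).1
  have h2l : 2 ^ l = 2 * 2 ^ (l - 1) := by
    conv_lhs => rw [show l = (l - 1) + 1 from by omega]
    ring
  rw [h2l]
  exact GAIGaux.per_stage p (2 ^ (l - 1)) Nat.one_le_two_pow f hf
end
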